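/- arXiv:1602.01613 — 6 statements merged into one kernel-verified Lean document; each statement's English description precedes it below -/
import Mathlib

section
/- Suppose additionally that W(t₀) = 0 almost surely for some t₀ ∈ ℝ. Let Γ be a Borel measurable, positive functional on D that is invariant under addition of constant functions, i.e., Γ(f + a) = Γ(f) for every f ∈ D and every constant a ∈ ℝ. Then, provided the expectations below exist, for every t ∈ ℝ one has E[e^{W(t₀ + t)} Γ(W)] = E[Γ(θ_t W)], where θ_t is the shift operator, (θ_t W)(s) = W(s − t). -/
open MeasureTheory Filter Set ProbabilityTheory
open scoped ENNReal NNReal Topology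

noncomputable section

/-- The grid `δℤ ⊆ ℝ`, with the convention `δℤ = ℝ` when `δ = 0`. -/
def grid (δ : ℝ) : Set ℝ := if δ = 0 then Set.univ else {t : ℝ | ∃ n : ℤ, t = δ * n}

/-- A function `f : ℝ → ℝ` is càdlàg: right-continuous with left limits. -/
def Cadlag (f : ℝ → ℝ) : Prop :=
  ∀ t : ℝ, ContinuousWithinAt f (Set.Ici t) t ∧ ∃ l : ℝ, Tendsto f (𝓝[<] t) (𝓝 l)

/-- `e^{W(t)}` as an extended nonnegative real. -/
def expW {Ω : Type*} (W : Ω → ℝ → ℝ) (ω : Ω) (t : ℝ) : ℝ≥0∞ :=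
  ENNReal.ofReal (Real.exp (W ω t))

/-- `M^δ = sup_{t ∈ δℤ} e^{W(t)}`. -/
def Msup {Ω : Type*} (W : Ω → ℝ → ℝ) (δ : ℝ) (ω : Ω) : ℝ≥0∞ :=
  ⨆ t ∈ grid δ, expW W ω t

/-- `S^η = η ∑_{t ∈ ηℤ} e^{W(t)}` for `η > 0`, and `S^0 = ∫_ℝ e^{W(t)} dt`. -/
def Ssum {Ω : Type*} (W : Ω → ℝ → ℝ) (η : ℝ) (ω : Ω) : ℝ≥0∞ :=
  if η = 0 then ∫⁻ t : ℝ, expW W ω t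
  else ENNReal.ofReal η * ∑' n : ℤ, expW W ω (η * n)

/-- `E[sup_{t ∈ δℤ ∩ [0,T]} e^{W(t)}]`, the quantity whose linear growth rate in `T`
is the generalized Pickands constant `H_W^δ`. -/
def picksum {Ω : Type*} [MeasurableSpace Ω] (P : Measure Ω) (W : Ω → ℝ → ℝ)
    (δ T : ℝ) : ℝ≥0∞ :=
  ∫⁻ ω, ⨆ t ∈ grid δ ∩ Set.Icc 0 T, expW W ω t ∂P

/-- Stationarity of the Brown–Resnick process `ξ_W` built from `W`, expressed through the
equivalent characterization that the Poisson point processes `{Uᵢ + Wᵢ}` and `{Uᵢ + θ_h Wᵢ}`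
on path space have the same intensity measure: for every `h ∈ ℝ` and Borel `A ⊆ D`,
`∫ e^{-u} P(u + W ∈ A) du = ∫ e^{-u} P(u + θ_h W ∈ A) du`, where `θ_h W (s) = W(s - h)`. -/
def BRStationary {Ω : Type*} [MeasurableSpace Ω] (P : Measure Ω) (W : Ω → ℝ → ℝ) : Prop :=
  ∀ (h : ℝ) (A : Set (ℝ → ℝ)), MeasurableSet A →
    (∫⁻ u : ℝ, ENNReal.ofReal (Real.exp (-u)) * P {ω | (fun s => u + W ω s) ∈ A}) =
    (∫⁻ u : ℝ, ENNReal.ofReal (Real.exp (-u)) * P {ω | (fun s => u + W ω (s - h)) ∈ A})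


lemma lint_exp_Icc (a b : ℝ) (hab : a ≤ b) :
    ∫⁻ u in Set.Icc a b, ENNReal.ofReal (Real.exp (-u)) =
      ENNReal.ofReal (Real.exp (-a) - Real.exp (-b)) := by
  have hcont : Continuous (fun u : ℝ => Real.exp (-u)) :=
    Real.continuous_exp.comp continuous_neg
  rw [← MeasureTheory.ofReal_integral_eq_lintegral_ofReal
      (hcont.integrableOn_Icc)
      (ae_of_all _ fun u => (Real.exp_pos _).le)]
  congr 1
  rw [MeasureTheory.integral_Icc_eq_integral_Ioc, ← intervalIntegral.integral_of_le hab]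
  calc ∫ u in a..b, Real.exp (-u) = ∫ x in -b..-a, Real.exp x :=
        intervalIntegral.integral_comp_neg (fun x => Real.exp x)
    _ = Real.exp (-a) - Real.exp (-b) := integral_exp

lemma lint_slab (g : ℝ) (c : ℝ≥0∞) :
    (∫⁻ aa in Set.Ioi (0:ℝ), (if aa < g then c else 0)) = c * ENNReal.ofReal g := by
  have h1 : (fun aa : ℝ => if aa < g then c else 0)
      = (Set.Iio g).indicator (fun _ => c) := by
    funext aa; by_cases h : aa < g <;> simp [Set.indicator_apply, Set.mem_Iio, h]
  rw [h1, lintegral_indicator_const measurableSet_Iio,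
      Measure.restrict_apply measurableSet_Iio, Set.inter_comm, Set.Ioi_inter_Iio,
      Real.volume_Ioo, sub_zero]

/-- **Lemma 1 (Dȩbicki–Engelke–Hashorva).**
Let `W` be a càdlàg process with `W 0 = 0` a.s. and `E e^{W(t)} = 1` for all `t`, such that the
associated Brown–Resnick process `ξ_W` is max-stable and stationary.  Suppose moreover that
`W t₀ = 0` a.s. for some `t₀ ∈ ℝ`.  If `Γ` is a Borel measurable, positive functional on the
path space that is invariant under addition of constant functions then, provided the
expectations below exist,
`E[e^{W(t₀ + t)} Γ(W)] = E[Γ(θ_t W)]` for every `t ∈ ℝ`, where `θ_t W (s) = W (s - t)`. -/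
theorem generalized_pickands_shift_identity
    {Ω : Type*} [MeasurableSpace Ω] (P : Measure Ω) [IsProbabilityMeasure P]
    (W : Ω → ℝ → ℝ) (hWmeas : Measurable W)
    (hpath : ∀ ω, Cadlag (W ω))
    (hW0 : ∀ᵐ ω ∂P, W ω 0 = 0)
    (hmarg : ∀ t : ℝ, ∫⁻ ω, expW W ω t ∂P = 1)
    (hstat : BRStationary P W)
    (t₀ : ℝ) (ht₀ : ∀ᵐ ω ∂P, W ω t₀ = 0)
    (Γ : (ℝ → ℝ) → ℝ) (hΓmeas : Measurable Γ)
    (hΓpos : ∀ f : ℝ → ℝ, 0 < Γ f)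
    (hΓinv : ∀ (f : ℝ → ℝ) (a : ℝ), Γ (fun s => f s + a) = Γ f)
    (t : ℝ)
    (hint₁ : Integrable (fun ω => Real.exp (W ω (t₀ + t)) * Γ (W ω)) P)
    (hint₂ : Integrable (fun ω => Γ (fun s => W ω (s - t))) P) :
    ∫ ω, Real.exp (W ω (t₀ + t)) * Γ (W ω) ∂P
      = ∫ ω, Γ (fun s => W ω (s - t)) ∂P := by
  classical
  have hXmeas : Measurable (fun ω => W ω (t₀ + t)) :=
    (measurable_pi_apply (t₀ + t)).comp hWmeas
  have hWt : Measurable (fun ω => (fun s => W ω (s - t))) :=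
    measurable_pi_lambda _ fun s => (measurable_pi_apply (s - t)).comp hWmeas
  have hGmeas : Measurable (fun ω => Γ (W ω)) := hΓmeas.comp hWmeas
  have hG'meas : Measurable (fun ω => Γ (fun s => W ω (s - t))) := hΓmeas.comp hWt
  have hc₀r : (0:ℝ) < 1 - Real.exp (-1) := by
    have : Real.exp (-1) < 1 := Real.exp_lt_one_iff.mpr (by norm_num)
    linarith
  have hc₀pos : ENNReal.ofReal (1 - Real.exp (-1)) ≠ 0 :=
    (ENNReal.ofReal_pos.mpr hc₀r).ne'
  have hc₀top : ENNReal.ofReal (1 - Real.exp (-1)) ≠ ⊤ := ENNReal.ofReal_ne_top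
  -- Step A: the key identity at each level a.
  have key : ∀ a : ℝ,
      (∫⁻ ω, (if a < Γ (W ω) then ENNReal.ofReal (Real.exp (W ω (t₀ + t))) else 0) ∂P)
        = ∫⁻ ω, (if a < Γ (fun s => W ω (s - t)) then 1 else 0) ∂P := by
    intro a
    set A : Set (ℝ → ℝ) := {f | f (t₀ + t) ∈ Set.Icc (0:ℝ) 1 ∧ a < Γ f} with hAdef
    have hA : MeasurableSet A := by
      rw [hAdef, Set.setOf_and]
      exact ((measurable_pi_apply (t₀ + t)) measurableSet_Icc).inter
        (hΓmeas measurableSet_Ioi)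
    have h := hstat t A hA
    -- left-hand side of stationarity
    have hLset : ∀ u : ℝ, {ω | (fun s => u + W ω s) ∈ A}
        = {ω | u + W ω (t₀ + t) ∈ Set.Icc (0:ℝ) 1 ∧ a < Γ (W ω)} := by
      intro u
      ext ω
      have hg : Γ (fun s => u + W ω s) = Γ (W ω) := by
        have he : (fun s => u + W ω s) = fun s => W ω s + u := by funext s; ring
        rw [he, hΓinv]
      simp only [hAdef, Set.mem_setOf_eq, hg]
    have hL : (∫⁻ u : ℝ, ENNReal.ofReal (Real.exp (-u)) * P {ω | (fun s => u + W ω s) ∈ A})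
        = ENNReal.ofReal (1 - Real.exp (-1)) *
          ∫⁻ ω, (if a < Γ (W ω) then ENNReal.ofReal (Real.exp (W ω (t₀ + t))) else 0) ∂P := by
      have step1 : ∀ u : ℝ,
          ENNReal.ofReal (Real.exp (-u)) * P {ω | (fun s => u + W ω s) ∈ A}
          = ∫⁻ ω, (if u + W ω (t₀ + t) ∈ Set.Icc (0:ℝ) 1 ∧ a < Γ (W ω)
              then ENNReal.ofReal (Real.exp (-u)) else 0) ∂P := by
        intro u
        rw [hLset u]
        have hS : MeasurableSet {ω | u + W ω (t₀ + t) ∈ Set.Icc (0:ℝ) 1 ∧ a < Γ (W ω)} := by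
          rw [Set.setOf_and]
          exact ((measurable_const.add hXmeas) measurableSet_Icc).inter
            (hGmeas measurableSet_Ioi)
        rw [← lintegral_indicator_const hS]
        refine lintegral_congr fun ω => ?_
        simp only [Set.indicator_apply, Set.mem_setOf_eq]
      rw [lintegral_congr step1]
      have hmeasH : Measurable (Function.uncurry fun (u : ℝ) (ω : Ω) =>
          (if u + W ω (t₀ + t) ∈ Set.Icc (0:ℝ) 1 ∧ a < Γ (W ω)
            then ENNReal.ofReal (Real.exp (-u)) else 0)) := by
        have hset : MeasurableSet {p : ℝ × Ω |
            p.1 + W p.2 (t₀ + t) ∈ Set.Icc (0:ℝ) 1 ∧ a < Γ (W p.2)} := by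
          rw [Set.setOf_and]
          exact ((measurable_fst.add (hXmeas.comp measurable_snd)) measurableSet_Icc).inter
            ((hGmeas.comp measurable_snd) measurableSet_Ioi)
        exact Measurable.ite hset
          ((ENNReal.measurable_ofReal).comp (Real.measurable_exp.comp measurable_fst.neg))
          measurable_const
      rw [lintegral_lintegral_swap hmeasH.aemeasurable]
      have inner : ∀ ω : Ω,
          (∫⁻ u : ℝ, if u + W ω (t₀ + t) ∈ Set.Icc (0:ℝ) 1 ∧ a < Γ (W ω)
            then ENNReal.ofReal (Real.exp (-u)) else 0)
          = (if a < Γ (W ω) then ENNReal.ofReal (Real.exp (W ω (t₀ + t))) else 0) *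
              ENNReal.ofReal (1 - Real.exp (-1)) := by
        intro ω
        by_cases hc : a < Γ (W ω)
        · simp only [hc, and_true, if_true]
          have he : (fun u : ℝ => if u + W ω (t₀ + t) ∈ Set.Icc (0:ℝ) 1
              then ENNReal.ofReal (Real.exp (-u)) else 0)
              = (Set.Icc (-(W ω (t₀ + t))) (1 - W ω (t₀ + t))).indicator
                  (fun u => ENNReal.ofReal (Real.exp (-u))) := by
            funext u
            have hiff : u + W ω (t₀ + t) ∈ Set.Icc (0:ℝ) 1
                ↔ u ∈ Set.Icc (-(W ω (t₀ + t))) (1 - W ω (t₀ + t)) := by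
              simp only [Set.mem_Icc]
              constructor <;> intro hh <;> exact ⟨by linarith [hh.1, hh.2], by linarith [hh.1, hh.2]⟩
            rw [Set.indicator_apply]
            by_cases hu : u + W ω (t₀ + t) ∈ Set.Icc (0:ℝ) 1
            · rw [if_pos hu, if_pos (hiff.mp hu)]
            · rw [if_neg hu, if_neg (fun hm => hu (hiff.mpr hm))]
          rw [he, lintegral_indicator measurableSet_Icc,
            lint_exp_Icc _ _ (by linarith)]
          have hx : Real.exp (-(-(W ω (t₀ + t)))) - Real.exp (-(1 - W ω (t₀ + t)))
              = Real.exp (W ω (t₀ + t)) * (1 - Real.exp (-1)) := by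
            rw [neg_neg, show -(1 - W ω (t₀ + t)) = W ω (t₀ + t) + (-1) by ring,
              Real.exp_add]
            ring
          rw [hx, ENNReal.ofReal_mul (Real.exp_pos _).le]
        · simp [hc]
      have hfm : Measurable (fun ω =>
          if a < Γ (W ω) then ENNReal.ofReal (Real.exp (W ω (t₀ + t))) else 0) := by
        apply Measurable.ite
        · exact hGmeas measurableSet_Ioi
        · exact ENNReal.measurable_ofReal.comp (Real.measurable_exp.comp hXmeas)
        · exact measurable_const
      rw [lintegral_congr inner, lintegral_mul_const _ hfm, mul_comm]
    -- right-hand side of stationarity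
    have hR : (∫⁻ u : ℝ, ENNReal.ofReal (Real.exp (-u)) *
          P {ω | (fun s => u + W ω (s - t)) ∈ A})
        = ENNReal.ofReal (1 - Real.exp (-1)) *
          ∫⁻ ω, (if a < Γ (fun s => W ω (s - t)) then 1 else 0) ∂P := by
      have hPset : ∀ u : ℝ, P {ω | (fun s => u + W ω (s - t)) ∈ A}
          = if u ∈ Set.Icc (0:ℝ) 1 then P {ω | a < Γ (fun s => W ω (s - t))} else 0 := by
        intro u
        have hae : {ω | (fun s => u + W ω (s - t)) ∈ A} =ᵐ[P]
            {ω | u ∈ Set.Icc (0:ℝ) 1 ∧ a < Γ (fun s => W ω (s - t))} := by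
          filter_upwards [ht₀] with ω hω
          have hg : Γ (fun s => u + W ω (s - t)) = Γ (fun s => W ω (s - t)) := by
            have he : (fun s => u + W ω (s - t)) = fun s => (fun s => W ω (s - t)) s + u := by
              funext s; ring
            rw [he, hΓinv]
          show ((fun s => u + W ω (s - t)) ∈ A)
              = (u ∈ Set.Icc (0:ℝ) 1 ∧ a < Γ fun s => W ω (s - t))
          rw [eq_iff_iff]
          constructor
          · rintro ⟨h1, h2⟩
            rw [hg] at h2
            refine ⟨?_, h2⟩
            have h1' : u + W ω (t₀ + t - t) ∈ Set.Icc (0:ℝ) 1 := h1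
            rwa [show t₀ + t - t = t₀ by ring, hω, add_zero] at h1'
          · rintro ⟨h1, h2⟩
            refine ⟨?_, ?_⟩
            · show u + W ω (t₀ + t - t) ∈ Set.Icc (0:ℝ) 1
              rwa [show t₀ + t - t = t₀ by ring, hω, add_zero]
            · rwa [hg]
        rw [measure_congr hae]
        by_cases hu : u ∈ Set.Icc (0:ℝ) 1
        · simp [hu]
        · simp [hu]
      calc (∫⁻ u : ℝ, ENNReal.ofReal (Real.exp (-u)) *
              P {ω | (fun s => u + W ω (s - t)) ∈ A})
          = ∫⁻ u : ℝ, (Set.Icc (0:ℝ) 1).indicator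
              (fun u => ENNReal.ofReal (Real.exp (-u)) *
                P {ω | a < Γ (fun s => W ω (s - t))}) u := by
            refine lintegral_congr fun u => ?_
            rw [hPset u]
            by_cases hu : u ∈ Set.Icc (0:ℝ) 1 <;> simp [Set.indicator_apply, hu]
        _ = ∫⁻ u in Set.Icc (0:ℝ) 1, ENNReal.ofReal (Real.exp (-u)) *
              P {ω | a < Γ (fun s => W ω (s - t))} :=
            lintegral_indicator measurableSet_Icc _
        _ = (∫⁻ u in Set.Icc (0:ℝ) 1, ENNReal.ofReal (Real.exp (-u))) *
              P {ω | a < Γ (fun s => W ω (s - t))} :=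
            lintegral_mul_const _
              ((ENNReal.measurable_ofReal).comp (Real.measurable_exp.comp measurable_neg))
        _ = ENNReal.ofReal (1 - Real.exp (-1)) *
              P {ω | a < Γ (fun s => W ω (s - t))} := by
            rw [lint_exp_Icc 0 1 zero_le_one, neg_zero, Real.exp_zero]
        _ = ENNReal.ofReal (1 - Real.exp (-1)) *
              ∫⁻ ω, (if a < Γ (fun s => W ω (s - t)) then 1 else 0) ∂P := by
            congr 1
            have hS' : MeasurableSet {ω | a < Γ (fun s => W ω (s - t))} :=
              hG'meas measurableSet_Ioi
            rw [← one_mul (P {ω | a < Γ (fun s => W ω (s - t))}),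
              ← lintegral_indicator_const hS' 1]
            refine lintegral_congr fun ω => ?_
            simp only [Set.indicator_apply, Set.mem_setOf_eq]
    rw [hL, hR] at h
    exact (ENNReal.mul_right_inj hc₀pos hc₀top).mp h
  -- Step B: layer-cake and conclusion.
  have hnn1 : 0 ≤ᵐ[P] fun ω => Real.exp (W ω (t₀ + t)) * Γ (W ω) :=
    ae_of_all _ fun ω => mul_nonneg (Real.exp_pos _).le (hΓpos _).le
  have hnn2 : 0 ≤ᵐ[P] fun ω => Γ (fun s => W ω (s - t)) :=
    ae_of_all _ fun ω => (hΓpos _).le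
  rw [integral_eq_lintegral_of_nonneg_ae hnn1 hint₁.1,
      integral_eq_lintegral_of_nonneg_ae hnn2 hint₂.1]
  congr 1
  have swap1 : ∫⁻ ω, (∫⁻ aa in Set.Ioi (0:ℝ),
        (if aa < Γ (W ω) then ENNReal.ofReal (Real.exp (W ω (t₀ + t))) else 0)) ∂P
      = ∫⁻ aa in Set.Ioi (0:ℝ), ∫⁻ ω,
        (if aa < Γ (W ω) then ENNReal.ofReal (Real.exp (W ω (t₀ + t))) else 0) ∂P := by
    refine lintegral_lintegral_swap ?_
    refine (Measurable.ite (measurableSet_lt measurable_snd (hGmeas.comp measurable_fst))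
      ((ENNReal.measurable_ofReal).comp
        (Real.measurable_exp.comp (hXmeas.comp measurable_fst)))
      measurable_const).aemeasurable
  have swap2 : ∫⁻ ω, (∫⁻ aa in Set.Ioi (0:ℝ),
        (if aa < Γ (fun s => W ω (s - t)) then (1:ℝ≥0∞) else 0)) ∂P
      = ∫⁻ aa in Set.Ioi (0:ℝ), ∫⁻ ω,
        (if aa < Γ (fun s => W ω (s - t)) then (1:ℝ≥0∞) else 0) ∂P := by
    refine lintegral_lintegral_swap ?_
    exact (Measurable.ite (measurableSet_lt measurable_snd (hG'meas.comp measurable_fst))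
      measurable_const measurable_const).aemeasurable
  calc ∫⁻ ω, ENNReal.ofReal (Real.exp (W ω (t₀ + t)) * Γ (W ω)) ∂P
      = ∫⁻ ω, (∫⁻ aa in Set.Ioi (0:ℝ),
          (if aa < Γ (W ω) then ENNReal.ofReal (Real.exp (W ω (t₀ + t))) else 0)) ∂P := by
        refine lintegral_congr fun ω => ?_
        rw [lint_slab, ← ENNReal.ofReal_mul (Real.exp_pos _).le]
    _ = ∫⁻ aa in Set.Ioi (0:ℝ), ∫⁻ ω,
          (if aa < Γ (W ω) then ENNReal.ofReal (Real.exp (W ω (t₀ + t))) else 0) ∂P := swap1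
    _ = ∫⁻ aa in Set.Ioi (0:ℝ), ∫⁻ ω,
          (if aa < Γ (fun s => W ω (s - t)) then (1:ℝ≥0∞) else 0) ∂P :=
        lintegral_congr fun aa => key aa
    _ = ∫⁻ ω, (∫⁻ aa in Set.Ioi (0:ℝ),
          (if aa < Γ (fun s => W ω (s - t)) then (1:ℝ≥0∞) else 0)) ∂P := swap2.symm
    _ = ∫⁻ ω, ENNReal.ofReal (Γ (fun s => W ω (s - t))) ∂P := by
        refine lintegral_congr fun ω => ?_
        rw [lint_slab, one_mul]
end
end

section
/- Let δ > 0. If ξ_W^δ possesses an M3 representation and P(S^δ < ∞) = 1, then the generalized Pickands constant coincides with the M3 constant: H_W^δ = C_W^δ > 0. -/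
open MeasureTheory Filter Set ProbabilityTheory
open scoped ENNReal NNReal Topology

noncomputable section

/-- The measure `ν_δ` on `ℝ`: `δ` times the counting measure on `δℤ` for `δ > 0`, and the
Lebesgue measure for `δ = 0`. -/
def latticeMeasure (δ : ℝ) : Measure ℝ :=
  if δ = 0 then volume
  else ENNReal.ofReal δ • Measure.sum (fun n : ℤ => Measure.dirac (δ * n))

/-- `ξ_W^δ` (the Brown–Resnick process associated with `W`, restricted to `δℤ`, or `ξ_W`
itself for `δ = 0`) admits a mixed moving maxima (M3) representation with shape process `F`
(defined on a probability space `Ω'` with law `P'`) and constant `C = C_W^δ`.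
This is encoded through: `F` is measurable (and càdlàg when `δ = 0`) with
`sup_{t ∈ δℤ} F(t) = F(0) = 0` a.s.; `C = (E ∫ e^{F(t)} ν_δ(dt))⁻¹ ∈ (0,∞)`; and the
finite-dimensional distributions of `ξ_W^δ`, expressed through exponent measures, match those
of the M3 process: for all `t₁,…,tₙ ∈ δℤ` and `x₁,…,xₙ ∈ ℝ`,
`E[max_j e^{W(t_j) - x_j}] = C · E[∫ max_j e^{F(t_j - r) - x_j} ν_δ(dr)]`. -/
def M3Rep {Ω Ω' : Type*} [MeasurableSpace Ω] [MeasurableSpace Ω']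
    (P : Measure Ω) (P' : Measure Ω') (W : Ω → ℝ → ℝ) (F : Ω' → ℝ → ℝ)
    (δ : ℝ) (C : ℝ≥0∞) : Prop :=
  Measurable F ∧
  (δ = 0 → ∀ ω', Cadlag (F ω')) ∧
  (∀ᵐ ω' ∂P', F ω' 0 = 0 ∧ ∀ t ∈ grid δ, F ω' t ≤ 0) ∧
  C = (∫⁻ ω', ∫⁻ t, ENNReal.ofReal (Real.exp (F ω' t)) ∂(latticeMeasure δ) ∂P')⁻¹ ∧
  0 < C ∧ C < ⊤ ∧
  (∀ (n : ℕ) (t x : Fin n → ℝ), (∀ i, t i ∈ grid δ) →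
    (∫⁻ ω, ⨆ i, ENNReal.ofReal (Real.exp (W ω (t i) - x i)) ∂P) =
      C * ∫⁻ ω', ∫⁻ r, ⨆ i, ENNReal.ofReal (Real.exp (F ω' (t i - r) - x i))
        ∂(latticeMeasure δ) ∂P')

section AuxPickands
set_option linter.unusedSectionVars false


private lemma grid_mem' {δ : ℝ} (hδ : δ ≠ 0) {x : ℝ} : x ∈ grid δ ↔ ∃ n : ℤ, x = δ * n := by
  simp [grid, hδ]

private lemma lat_lintegral {δ : ℝ} (hδ : 0 < δ) (f : ℝ → ℝ≥0∞) :
    ∫⁻ r, f r ∂(latticeMeasure δ) = ENNReal.ofReal δ * ∑' m : ℤ, f (δ * m) := by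
  rw [latticeMeasure, if_neg hδ.ne', lintegral_smul_measure, lintegral_sum_measure]
  simp [lintegral_dirac]

private lemma sup_grid_Icc {δ T : ℝ} (hδ : 0 < δ) (hT : 0 ≤ T) (g : ℝ → ℝ≥0∞) :
    (⨆ t ∈ grid δ ∩ Set.Icc 0 T, g t)
      = ⨆ i : Fin (⌊T / δ⌋.toNat + 1), g (δ * (i.val : ℝ)) := by
  apply le_antisymm
  · refine iSup₂_le fun t ht => ?_
    obtain ⟨n, rfl⟩ := (grid_mem' hδ.ne').mp ht.1
    obtain ⟨h0, hT'⟩ := ht.2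
    have hn0 : (0:ℝ) ≤ (n:ℝ) := by nlinarith
    have hn0' : (0:ℤ) ≤ n := by exact_mod_cast hn0
    have hnle : n ≤ ⌊T / δ⌋ := Int.le_floor.mpr (by rw [le_div_iff₀ hδ]; nlinarith)
    have hi : n.toNat < ⌊T / δ⌋.toNat + 1 := by omega
    have harg : δ * (n:ℝ) = δ * ((n.toNat : ℕ) : ℝ) := by
      congr 1; exact_mod_cast (Int.toNat_of_nonneg hn0').symm
    rw [harg]
    exact le_iSup (fun i : Fin (⌊T / δ⌋.toNat + 1) => g (δ * (i.val : ℝ))) ⟨n.toNat, hi⟩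
  · refine iSup_le fun i => ?_
    have hfl : (0:ℤ) ≤ ⌊T / δ⌋ := Int.floor_nonneg.mpr (div_nonneg hT hδ.le)
    have h1 : ((i.val:ℕ):ℝ) ≤ ((⌊T / δ⌋.toNat : ℕ):ℝ) := by
      exact_mod_cast Nat.lt_succ_iff.mp i.2
    have h2 : ((⌊T / δ⌋.toNat : ℕ):ℝ) = ((⌊T / δ⌋ : ℤ):ℝ) := by
      exact_mod_cast Int.toNat_of_nonneg hfl
    have hle : ((i.val:ℕ):ℝ) ≤ T / δ := by
      rw [h2] at h1; exact h1.trans (Int.floor_le _)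
    have hmem : δ * (i.val : ℝ) ∈ grid δ ∩ Set.Icc 0 T := by
      refine ⟨(grid_mem' hδ.ne').mpr ⟨(i.val:ℤ), by push_cast; ring⟩, ⟨by positivity, ?_⟩⟩
      rw [mul_comm]; exact (le_div_iff₀ hδ).mp hle
    exact le_biSup g hmem

variable {Ω' : Type*} [MeasurableSpace Ω']

private def phiF (P' : Measure Ω') (F : Ω' → ℝ → ℝ) (δ : ℝ) (j : ℤ) : ℝ≥0∞ :=
  ∫⁻ ω', ENNReal.ofReal (Real.exp (F ω' (δ * (j : ℝ)))) ∂P'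

private lemma measF_t {F : Ω' → ℝ → ℝ} (hF : Measurable F)
    (t : ℝ) : Measurable fun ω' => ENNReal.ofReal (Real.exp (F ω' t)) :=
  ENNReal.measurable_ofReal.comp (Real.measurable_exp.comp ((measurable_pi_apply t).comp hF))

private def gSup (F : Ω' → ℝ → ℝ) (δ : ℝ) (N : ℕ) (ω' : Ω') (m : ℤ) : ℝ≥0∞ :=
  ⨆ i : Fin (N + 1), ENNReal.ofReal (Real.exp (F ω' (δ * (i.val : ℝ) - δ * (m : ℝ))))

private def tailW (F : Ω' → ℝ → ℝ) (δ : ℝ) (N : ℕ) (ω' : Ω') : ℝ≥0∞ :=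
  ∑' m : ℤ, if 0 ≤ m ∧ m ≤ (N : ℤ) then 0
    else ∑ i : Fin (N + 1), ENNReal.ofReal (Real.exp (F ω' (δ * (i.val : ℝ) - δ * (m : ℝ))))

private lemma gSup_ge {F : Ω' → ℝ → ℝ} {δ : ℝ} {ω' : Ω'}
    (h0 : F ω' 0 = 0) (N : ℕ) {m : ℤ} (hm : 0 ≤ m ∧ m ≤ (N : ℤ)) :
    (1 : ℝ≥0∞) ≤ gSup F δ N ω' m := by
  have hi : m.toNat < N + 1 := by omega
  have harg : δ * ((m.toNat : ℕ) : ℝ) - δ * (m : ℝ) = 0 := by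
    have : ((m.toNat : ℕ) : ℝ) = (m : ℝ) := by exact_mod_cast Int.toNat_of_nonneg hm.1
    rw [this]; ring
  have := le_iSup (fun i : Fin (N + 1) =>
    ENNReal.ofReal (Real.exp (F ω' (δ * (i.val : ℝ) - δ * (m : ℝ))))) ⟨m.toNat, hi⟩
  simpa [gSup, harg, h0] using this

private lemma gSup_term_le {F : Ω' → ℝ → ℝ} {δ : ℝ} (hδ : δ ≠ 0) {ω' : Ω'}
    (hle : ∀ t ∈ grid δ, F ω' t ≤ 0) (N : ℕ) (m : ℤ) (i : Fin (N + 1)) :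
    ENNReal.ofReal (Real.exp (F ω' (δ * (i.val : ℝ) - δ * (m : ℝ)))) ≤ 1 := by
  have hmem : δ * (i.val : ℝ) - δ * (m : ℝ) ∈ grid δ :=
    (grid_mem' hδ).mpr ⟨(i.val : ℤ) - m, by push_cast; ring⟩
  refine ENNReal.ofReal_le_one.mpr ?_
  rw [Real.exp_le_one_iff]
  exact hle _ hmem

private lemma gSup_tsum_ge {F : Ω' → ℝ → ℝ} {δ : ℝ} {ω' : Ω'}
    (h0 : F ω' 0 = 0) (N : ℕ) :
    ((N : ℝ≥0∞) + 1) ≤ ∑' m : ℤ, gSup F δ N ω' m := by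
  have h1 : ((N : ℝ≥0∞) + 1) = ∑ m ∈ Finset.Icc (0 : ℤ) (N : ℤ), (1 : ℝ≥0∞) := by
    rw [Finset.sum_const, Int.card_Icc]
    simp only [nsmul_eq_mul, mul_one]
    have : ((N : ℤ) + 1 - 0).toNat = N + 1 := by omega
    rw [this]; push_cast; ring
  rw [h1]
  refine le_trans (Finset.sum_le_sum fun m hm => ?_) (ENNReal.sum_le_tsum _)
  exact gSup_ge h0 N (by simpa [Finset.mem_Icc] using hm)

private lemma gSup_tsum_le {F : Ω' → ℝ → ℝ} {δ : ℝ} (hδ : δ ≠ 0) {ω' : Ω'}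
    (hle : ∀ t ∈ grid δ, F ω' t ≤ 0) (N : ℕ) :
    ∑' m : ℤ, gSup F δ N ω' m ≤ ((N : ℝ≥0∞) + 1) + tailW F δ N ω' := by
  have hpt : ∀ m : ℤ, gSup F δ N ω' m ≤
      (if 0 ≤ m ∧ m ≤ (N : ℤ) then (1 : ℝ≥0∞) else 0) +
      (if 0 ≤ m ∧ m ≤ (N : ℤ) then 0
        else ∑ i : Fin (N + 1), ENNReal.ofReal (Real.exp (F ω' (δ * (i.val : ℝ) - δ * (m : ℝ))))) := by
    intro m
    by_cases h : 0 ≤ m ∧ m ≤ (N : ℤ)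
    · simp only [if_pos h, add_zero]
      exact iSup_le fun i => gSup_term_le hδ hle N m i
    · simp only [if_neg h, zero_add]
      exact iSup_le fun i => Finset.single_le_sum (f := fun i : Fin (N+1) =>
        ENNReal.ofReal (Real.exp (F ω' (δ * (i.val : ℝ) - δ * (m : ℝ)))))
        (fun _ _ => zero_le) (Finset.mem_univ i)
  refine le_trans (ENNReal.tsum_le_tsum hpt) ?_
  rw [ENNReal.tsum_add]
  refine add_le_add_left (le_of_eq ?_) _
  rw [tsum_eq_sum (s := Finset.Icc (0 : ℤ) (N : ℤ))
    (fun m hm => if_neg (by simpa [Finset.mem_Icc] using hm))]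
  rw [Finset.sum_congr rfl (fun m hm => if_pos (by simpa [Finset.mem_Icc] using hm))]
  rw [Finset.sum_const, Int.card_Icc]
  have : ((N : ℤ) + 1 - 0).toNat = N + 1 := by omega
  rw [this]
  simp only [nsmul_eq_mul, mul_one]
  push_cast; ring

private lemma tailW_lintegral (P' : Measure Ω') {F : Ω' → ℝ → ℝ} (hF : Measurable F)
    (δ : ℝ) (N : ℕ) :
    ∫⁻ ω', tailW F δ N ω' ∂P' =
      ∑' m : ℤ, if 0 ≤ m ∧ m ≤ (N : ℤ) then 0
        else ∑ i : Fin (N + 1), phiF P' F δ ((i.val : ℤ) - m) := by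
  unfold tailW
  rw [lintegral_tsum (fun m => ?_)]
  · refine tsum_congr fun m => ?_
    by_cases h : 0 ≤ m ∧ m ≤ (N : ℤ)
    · simp [h]
    · simp only [if_neg h]
      rw [lintegral_finset_sum _ (fun i _ => measF_t hF _)]
      refine Finset.sum_congr rfl fun i _ => ?_
      have harg : δ * (i.val : ℝ) - δ * (m : ℝ) = δ * (((i.val : ℤ) - m : ℤ) : ℝ) := by
        push_cast; ring
      rw [harg]; rfl
  · by_cases h : 0 ≤ m ∧ m ≤ (N : ℤ)
    · simp only [if_pos h]; exact aemeasurable_const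
    · simp only [if_neg h]
      exact (Finset.measurable_sum _ fun i _ => measF_t hF _).aemeasurable

private lemma tailE_le (P' : Measure Ω') (F : Ω' → ℝ → ℝ) (δ : ℝ)
    (s : Finset ℤ) (K : ℕ) (hs : ∀ j ∈ s, j.natAbs ≤ K) (N : ℕ) :
    (∑' m : ℤ, if 0 ≤ m ∧ m ≤ (N : ℤ) then 0
        else ∑ i : Fin (N + 1), phiF P' F δ ((i.val : ℤ) - m))
      ≤ (K : ℝ≥0∞) * (∑' j : ℤ, phiF P' F δ j) + (K : ℝ≥0∞) * (∑' j : ℤ, phiF P' F δ j)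
        + ((N : ℝ≥0∞) + 1) * (∑' b : {j : ℤ // j ∉ s}, phiF P' F δ b.val) := by
  set φ : ℤ → ℝ≥0∞ := phiF P' F δ with hφ
  set Stot : ℝ≥0∞ := ∑' j : ℤ, φ j with hStot
  set Bs : ℝ≥0∞ := ∑' b : {j : ℤ // j ∉ s}, φ b.val with hBs
  have hswap : (∑' m : ℤ, if 0 ≤ m ∧ m ≤ (N : ℤ) then 0
        else ∑ i : Fin (N + 1), φ ((i.val : ℤ) - m))
      = ∑ i : Fin (N + 1), ∑' m : ℤ, (if 0 ≤ m ∧ m ≤ (N : ℤ) then 0 else φ ((i.val : ℤ) - m)) := by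
    rw [← Summable.tsum_finsetSum (fun i _ => ENNReal.summable)]
    refine tsum_congr fun m => ?_
    by_cases h : 0 ≤ m ∧ m ≤ (N : ℤ) <;> simp [h]
  rw [hswap]
  have claim1 : ∀ i : Fin (N + 1),
      (∑' m : ℤ, (if 0 ≤ m ∧ m ≤ (N : ℤ) then 0 else φ ((i.val : ℤ) - m))) ≤ Stot := by
    intro i
    have h1 : ∀ m : ℤ,
        (if 0 ≤ m ∧ m ≤ (N : ℤ) then 0 else φ ((i.val : ℤ) - m)) ≤ φ ((i.val : ℤ) - m) := by
      intro m; split_ifs; exacts [zero_le, le_rfl]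
    exact le_trans (ENNReal.tsum_le_tsum h1)
      (ENNReal.tsum_comp_le_tsum_of_injective
        (f := fun m : ℤ => (i.val : ℤ) - m) sub_right_injective φ)
  have claim2 : ∀ i : Fin (N + 1), K ≤ i.val → i.val + K ≤ N →
      (∑' m : ℤ, (if 0 ≤ m ∧ m ≤ (N : ℤ) then 0 else φ ((i.val : ℤ) - m))) ≤ Bs := by
    intro i hKi hiK
    have hsupp : Function.support
        (fun m : ℤ => if 0 ≤ m ∧ m ≤ (N : ℤ) then 0 else φ ((i.val : ℤ) - m))
        ⊆ {m : ℤ | ¬(0 ≤ m ∧ m ≤ (N : ℤ))} := by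
      intro m hm
      by_contra h
      simp only [Set.mem_setOf_eq, not_not] at h
      exact hm (by simp [h])
    rw [← tsum_subtype_eq_of_support_subset hsupp]
    have hcongr : ∀ x : {m : ℤ | ¬(0 ≤ m ∧ m ≤ (N : ℤ))},
        (if 0 ≤ (x : ℤ) ∧ (x : ℤ) ≤ (N : ℤ) then 0 else φ ((i.val : ℤ) - (x : ℤ)))
          = φ ((i.val : ℤ) - (x : ℤ)) := fun x => if_neg x.2
    rw [tsum_congr hcongr]
    have hmap : ∀ x : {m : ℤ | ¬(0 ≤ m ∧ m ≤ (N : ℤ))}, ((i.val : ℤ) - (x : ℤ)) ∉ s := by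
      intro x hjs
      have hx := x.2
      simp only [Set.mem_setOf_eq, not_and, not_le] at hx
      have := hs _ hjs
      omega
    have hinj : Function.Injective
        (fun x : {m : ℤ | ¬(0 ≤ m ∧ m ≤ (N : ℤ))} =>
          (⟨(i.val : ℤ) - (x : ℤ), hmap x⟩ : {j : ℤ // j ∉ s})) := by
      intro a b hab
      have := congrArg Subtype.val hab
      simp only at this
      exact Subtype.ext (by omega)
    exact ENNReal.tsum_comp_le_tsum_of_injective hinj (fun b => φ b.val)
  have hper : ∀ i : Fin (N + 1),
      (∑' m : ℤ, (if 0 ≤ m ∧ m ≤ (N : ℤ) then 0 else φ ((i.val : ℤ) - m)))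
        ≤ (if i.val < K then Stot else 0) + (if N < i.val + K then Stot else 0) + Bs := by
    intro i
    by_cases h1 : i.val < K
    · exact le_trans (claim1 i) (by simp [h1]; exact le_trans le_self_add le_self_add)
    · by_cases h2 : N < i.val + K
      · refine le_trans (claim1 i) ?_
        simp only [if_neg h1, if_pos h2, zero_add]
        exact le_self_add
      · refine le_trans (claim2 i (by omega) (by omega)) ?_
        simp only [if_neg h1, if_neg h2, zero_add, add_zero]
        exact le_rfl
  refine le_trans (Finset.sum_le_sum fun i _ => hper i) ?_
  rw [Finset.sum_add_distrib, Finset.sum_add_distrib]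
  have hsum1 : (∑ i : Fin (N + 1), if i.val < K then Stot else 0) ≤ (K : ℝ≥0∞) * Stot := by
    rw [Fin.sum_univ_eq_sum_range (fun k => if k < K then Stot else 0)]
    have : (∑ k ∈ Finset.range (N + 1), if k < K then Stot else 0)
        = ∑ k ∈ Finset.range (N + 1) ∩ Finset.range K, Stot := by
      rw [← Finset.sum_ite_mem]
      exact Finset.sum_congr rfl fun k _ => by simp [Finset.mem_range]
    rw [this]
    refine le_trans (Finset.sum_le_sum_of_subset Finset.inter_subset_right) ?_
    rw [Finset.sum_const, Finset.card_range, nsmul_eq_mul]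
  have hsum2 : (∑ i : Fin (N + 1), if N < i.val + K then Stot else 0) ≤ (K : ℝ≥0∞) * Stot := by
    rw [Fin.sum_univ_eq_sum_range (fun k => if N < k + K then Stot else 0)]
    have hpt : ∀ k ∈ Finset.range (N + 1),
        (if N < k + K then Stot else 0)
          ≤ (if k ∈ Finset.Ico (N + 1 - K) (N + 1) then Stot else 0) := by
      intro k hk
      have hk' : k < N + 1 := Finset.mem_range.mp hk
      by_cases h : N < k + K
      · have hmem : k ∈ Finset.Ico (N + 1 - K) (N + 1) := Finset.mem_Ico.mpr ⟨by omega, hk'⟩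
        rw [if_pos h, if_pos hmem]
      · rw [if_neg h]; exact zero_le
    refine le_trans (Finset.sum_le_sum hpt) ?_
    rw [Finset.sum_ite_mem]
    refine le_trans (Finset.sum_le_sum_of_subset Finset.inter_subset_right) ?_
    rw [Finset.sum_const, Nat.card_Ico, nsmul_eq_mul]
    exact mul_le_mul_left (Nat.cast_le.mpr (by omega)) Stot
  have hsum3 : (∑ _i : Fin (N + 1), Bs) = ((N : ℝ≥0∞) + 1) * Bs := by
    rw [Finset.sum_const, Finset.card_univ, Fintype.card_fin, nsmul_eq_mul]
    congr 1
    push_cast; ring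
  exact add_le_add (add_le_add hsum1 hsum2) (le_of_eq hsum3)

end AuxPickands

/-- **Corollary to Theorems 1 and 4 (Dȩbicki–Engelke–Hashorva).**
Let `W` be such that the corresponding max-stable Brown–Resnick process `ξ_W` is stationary and
has càdlàg paths, and let `δ > 0`.  If `ξ_W^δ` possesses an M3 representation (with shape
process `F` and constant `C = C_W^δ`) and `P(S^δ < ∞) = 1`, then the generalized Pickands
constant coincides with the M3 constant: `H_W^δ = C_W^δ > 0`. -/
theorem pickands_eq_m3_constant
    {Ω : Type*} [MeasurableSpace Ω] (P : Measure Ω) [IsProbabilityMeasure P]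
    (W : Ω → ℝ → ℝ) (hWmeas : Measurable W)
    (hpath : ∀ ω, Cadlag (W ω))
    (hW0 : ∀ᵐ ω ∂P, W ω 0 = 0)
    (hmarg : ∀ t : ℝ, ∫⁻ ω, expW W ω t ∂P = 1)
    (hstat : BRStationary P W)
    (hxi : ∀ E : Set ℝ, IsCompact E → (∫⁻ ω, ⨆ t ∈ E, expW W ω t ∂P) < ⊤)
    (δ : ℝ) (hδ : 0 < δ)
    {Ω' : Type*} [MeasurableSpace Ω'] (P' : Measure Ω') [IsProbabilityMeasure P']
    (F : Ω' → ℝ → ℝ) (C : ℝ≥0∞)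
    (hM3 : M3Rep P P' W F δ C)
    (hS : ∀ᵐ ω ∂P, Ssum W δ ω < ⊤) :
    Tendsto (fun T : ℝ => picksum P W δ T / ENNReal.ofReal T) atTop (𝓝 C) ∧ 0 < C := by
  obtain ⟨hF, -, hFae, hCdef, hCpos, hCtop, hfdd⟩ := hM3
  set d : ℝ≥0∞ := ENNReal.ofReal δ with hd
  have hd0 : d ≠ 0 := by simp [hd, ENNReal.ofReal_eq_zero, not_le, hδ]
  have hdtop : d ≠ ⊤ := ENNReal.ofReal_ne_top
  set φ : ℤ → ℝ≥0∞ := phiF P' F δ with hφ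
  set Stot : ℝ≥0∞ := ∑' j : ℤ, φ j with hStotdef
  have hCne : C ≠ ⊤ := hCtop.ne
  -- `C = (d * Stot)⁻¹`
  have hCinner : (∫⁻ ω', ∫⁻ t, ENNReal.ofReal (Real.exp (F ω' t)) ∂(latticeMeasure δ) ∂P')
      = d * Stot := by
    have h1 : ∀ ω', (∫⁻ t, ENNReal.ofReal (Real.exp (F ω' t)) ∂(latticeMeasure δ))
        = d * ∑' m : ℤ, ENNReal.ofReal (Real.exp (F ω' (δ * (m:ℝ)))) := fun ω' =>
      lat_lintegral hδ _
    rw [lintegral_congr h1, lintegral_const_mul' _ _ hdtop,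
      lintegral_tsum (fun m => (measF_t hF _).aemeasurable)]
    rfl
  have hCeq : C = (d * Stot)⁻¹ := by rw [hCdef, hCinner]
  have hdStot_top : d * Stot ≠ ⊤ := by
    intro h
    rw [hCeq, h] at hCpos
    simp at hCpos
  have hStot_top : Stot ≠ ⊤ := by
    intro h
    apply hdStot_top
    rw [h, ENNReal.mul_top hd0]
  -- the key exact identity, for `T > 0`
  have hkey : ∀ T : ℝ, 0 < T →
      picksum P W δ T
        = C * ∫⁻ ω', d * ∑' m : ℤ, gSup F δ (⌊T/δ⌋.toNat) ω' m ∂P' := by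
    intro T hT
    have h1 := hfdd (⌊T/δ⌋.toNat + 1) (fun i => δ * (i.val : ℝ)) (fun _ => 0)
      (fun i => (grid_mem' hδ.ne').mpr ⟨(i.val : ℤ), by push_cast; ring⟩)
    simp only [sub_zero] at h1
    have h2 : picksum P W δ T
        = ∫⁻ ω, ⨆ i : Fin (⌊T/δ⌋.toNat + 1),
            ENNReal.ofReal (Real.exp (W ω (δ * (i.val:ℝ)))) ∂P := by
      refine lintegral_congr fun ω => ?_
      exact sup_grid_Icc hδ hT.le (fun t => ENNReal.ofReal (Real.exp (W ω t)))
    rw [h2, h1]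
    congr 1
    refine lintegral_congr fun ω' => ?_
    rw [lat_lintegral hδ]
    rfl
  -- cast helper
  have hofReal : ∀ N : ℕ, ENNReal.ofReal (δ * ((N:ℝ) + 1)) = d * ((N:ℝ≥0∞) + 1) := by
    intro N
    rw [ENNReal.ofReal_mul hδ.le]
    congr 1
    rw [ENNReal.ofReal_add (Nat.cast_nonneg N) zero_le_one, ENNReal.ofReal_one,
      ENNReal.ofReal_natCast]
  -- lower bound
  have hlow : ∀ T : ℝ, 0 < T → C * ENNReal.ofReal T ≤ picksum P W δ T := by
    intro T hT
    set N := ⌊T/δ⌋.toNat with hN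
    rw [hkey T hT]
    have hTle : ENNReal.ofReal T ≤ d * ((N:ℝ≥0∞) + 1) := by
      have h3 : ((⌊T/δ⌋ : ℤ):ℝ) = ((N:ℕ):ℝ) := by
        exact_mod_cast (Int.toNat_of_nonneg (Int.floor_nonneg.mpr
          (div_nonneg hT.le hδ.le))).symm
      have h2 : T/δ < ((N:ℕ):ℝ) + 1 := by
        rw [← h3]; exact Int.lt_floor_add_one _
      have h1 : T ≤ δ * ((N:ℝ) + 1) := by
        have : T = δ * (T/δ) := by field_simp
        rw [this]
        nlinarith
      rw [← hofReal N]
      exact ENNReal.ofReal_le_ofReal h1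
    have hg : d * ((N:ℝ≥0∞)+1) ≤ ∫⁻ ω', d * ∑' m : ℤ, gSup F δ N ω' m ∂P' := by
      have h1 : ∀ᵐ ω' ∂P', d * ((N:ℝ≥0∞)+1) ≤ d * ∑' m : ℤ, gSup F δ N ω' m := by
        filter_upwards [hFae] with ω' hω'
        exact mul_le_mul_right (gSup_tsum_ge hω'.1 N) d
      calc d * ((N:ℝ≥0∞)+1) = ∫⁻ _, d * ((N:ℝ≥0∞)+1) ∂P' := by
            rw [lintegral_const, measure_univ, mul_one]
      _ ≤ _ := lintegral_mono_ae h1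
    exact mul_le_mul_right (hTle.trans hg) C
  -- upper bound
  have hup : ∀ (s : Finset ℤ) (K : ℕ), (∀ j ∈ s, j.natAbs ≤ K) → ∀ T : ℝ, 0 < T →
      picksum P W δ T ≤ C * (d * ((⌊T/δ⌋.toNat : ℝ≥0∞) + 1))
        + C * d * ((K:ℝ≥0∞) * Stot + (K:ℝ≥0∞) * Stot)
        + C * (d * ((⌊T/δ⌋.toNat : ℝ≥0∞) + 1)) * (∑' b : {j : ℤ // j ∉ s}, φ b.val) := by
    intro s K hsK T hT
    set N := ⌊T/δ⌋.toNat with hN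
    rw [hkey T hT]
    have h1 : ∀ᵐ ω' ∂P', d * ∑' m : ℤ, gSup F δ N ω' m
        ≤ d * (((N:ℝ≥0∞)+1) + tailW F δ N ω') := by
      filter_upwards [hFae] with ω' hω'
      exact mul_le_mul_right (gSup_tsum_le hδ.ne' hω'.2 N) d
    have h2 : ∫⁻ ω', d * ∑' m : ℤ, gSup F δ N ω' m ∂P'
        ≤ d * (((N:ℝ≥0∞)+1) + ∫⁻ ω', tailW F δ N ω' ∂P') := by
      refine le_trans (lintegral_mono_ae h1) ?_
      rw [lintegral_const_mul' _ _ hdtop, lintegral_add_left measurable_const,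
        lintegral_const, measure_univ, mul_one]
    have h3 : ∫⁻ ω', tailW F δ N ω' ∂P'
        ≤ (K:ℝ≥0∞) * Stot + (K:ℝ≥0∞) * Stot
          + ((N:ℝ≥0∞)+1) * (∑' b : {j : ℤ // j ∉ s}, φ b.val) := by
      rw [tailW_lintegral P' hF δ N]
      exact tailE_le P' F δ s K hsK N
    refine le_trans (mul_le_mul_right
      (h2.trans (mul_le_mul_right (add_le_add_right h3 _) d)) C) (le_of_eq ?_)
    ring
  -- conclusion
  refine ⟨?_, hCpos⟩
  rw [ENNReal.tendsto_nhds hCne]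
  intro ε hε
  by_cases hεtop : ε = ⊤
  · filter_upwards [eventually_gt_atTop (0:ℝ)] with T hT
    exact ⟨by simp [hεtop], by simp [hεtop]⟩
  have hε2 : (0:ℝ≥0∞) < ε/2 := ENNReal.half_pos hε.ne'
  have htends := ENNReal.tendsto_tsum_compl_atTop_zero (f := φ) hStot_top
  have htends2 : Tendsto (fun s : Finset ℤ => C * ∑' b : {j : ℤ // j ∉ s}, φ b.val)
      atTop (𝓝 0) := by
    have := ENNReal.Tendsto.const_mul htends (Or.inr hCne)
    simpa using this
  obtain ⟨s, hsB⟩ := (htends2.eventually_lt_const hε2).exists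
  set K : ℕ := s.sup Int.natAbs with hK
  have hsK : ∀ j ∈ s, j.natAbs ≤ K := fun j hj => Finset.le_sup hj
  set Bs : ℝ≥0∞ := ∑' b : {j : ℤ // j ∉ s}, φ b.val with hBsdef
  have hBs_top : Bs ≠ ⊤ := by
    refine (lt_of_le_of_lt ?_ (lt_top_iff_ne_top.mpr hStot_top)).ne
    exact ENNReal.tsum_comp_le_tsum_of_injective Subtype.val_injective φ
  set R : ℝ≥0∞ := C*d + C*d*((K:ℝ≥0∞)*Stot + (K:ℝ≥0∞)*Stot) + C*d*Bs with hR
  have hR_top : R ≠ ⊤ := by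
    have h1 : C*d ≠ ⊤ := ENNReal.mul_ne_top hCne hdtop
    have h2 : (K:ℝ≥0∞)*Stot ≠ ⊤ := ENNReal.mul_ne_top (ENNReal.natCast_ne_top K) hStot_top
    exact ENNReal.add_ne_top.mpr ⟨ENNReal.add_ne_top.mpr
      ⟨h1, ENNReal.mul_ne_top h1 (ENNReal.add_ne_top.mpr ⟨h2, h2⟩)⟩,
      ENNReal.mul_ne_top h1 hBs_top⟩
  have hdiv : Tendsto (fun T : ℝ => R / ENNReal.ofReal T) atTop (𝓝 0) := by
    have h1 : Tendsto (fun T : ℝ => ENNReal.ofReal T) atTop (𝓝 ⊤) :=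
      ENNReal.tendsto_ofReal_atTop
    have h2 : Tendsto (fun T : ℝ => (ENNReal.ofReal T)⁻¹) atTop (𝓝 (⊤ : ℝ≥0∞)⁻¹) :=
      ENNReal.tendsto_inv_iff.mpr h1
    rw [ENNReal.inv_top] at h2
    have := ENNReal.Tendsto.const_mul h2 (Or.inr hR_top)
    simpa [div_eq_mul_inv] using this
  filter_upwards [eventually_gt_atTop (0:ℝ), hdiv.eventually_le_const hε2] with T hT hRT
  have hT0 : ENNReal.ofReal T ≠ 0 := (ENNReal.ofReal_pos.mpr hT).ne'
  constructor
  · have h1 : C ≤ picksum P W δ T / ENNReal.ofReal T := by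
      rw [ENNReal.le_div_iff_mul_le (Or.inl hT0) (Or.inl ENNReal.ofReal_ne_top)]
      exact hlow T hT
    exact le_trans tsub_le_self h1
  · set N := ⌊T/δ⌋.toNat with hN
    have hNle : d * ((N:ℝ≥0∞)+1) ≤ ENNReal.ofReal T + d := by
      have h3 : ((N:ℕ):ℝ) ≤ T/δ := by
        have := Int.toNat_of_nonneg (Int.floor_nonneg.mpr (div_nonneg hT.le hδ.le))
        have h4 : ((N:ℕ):ℝ) = ((⌊T/δ⌋ : ℤ):ℝ) := by exact_mod_cast this
        rw [h4]; exact Int.floor_le _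
      have h1 : δ * ((N:ℝ) + 1) ≤ T + δ := by
        have h5 : δ * (T/δ) = T := by field_simp
        nlinarith
      calc d * ((N:ℝ≥0∞)+1) = ENNReal.ofReal (δ * ((N:ℝ)+1)) := (hofReal N).symm
      _ ≤ ENNReal.ofReal (T + δ) := ENNReal.ofReal_le_ofReal h1
      _ = ENNReal.ofReal T + d := ENNReal.ofReal_add hT.le hδ.le
    have hnum : picksum P W δ T ≤ (C + C*Bs) * ENNReal.ofReal T + R := by
      refine (hup s K hsK T hT).trans ?_
      have e1 : C * (d * ((N:ℝ≥0∞)+1)) ≤ C * ENNReal.ofReal T + C * d := by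
        rw [← mul_add]; exact mul_le_mul_right hNle C
      have e2 : C * (d * ((N:ℝ≥0∞)+1)) * Bs ≤ (C * ENNReal.ofReal T + C * d) * Bs :=
        mul_le_mul_left e1 Bs
      calc C * (d * ((N:ℝ≥0∞)+1)) + C * d * ((K:ℝ≥0∞)*Stot + (K:ℝ≥0∞)*Stot)
            + C * (d * ((N:ℝ≥0∞)+1)) * Bs
          ≤ (C * ENNReal.ofReal T + C*d) + C*d*((K:ℝ≥0∞)*Stot + (K:ℝ≥0∞)*Stot)
            + (C * ENNReal.ofReal T + C*d) * Bs := add_le_add (add_le_add e1 le_rfl) e2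
      _ = (C + C*Bs) * ENNReal.ofReal T + R := by rw [hR]; ring
    have hdivle : picksum P W δ T / ENNReal.ofReal T
        ≤ (C + C*Bs) + R / ENNReal.ofReal T := by
      refine le_trans (ENNReal.div_le_div_right hnum _) ?_
      rw [ENNReal.add_div]
      refine add_le_add (le_of_eq ?_) le_rfl
      rw [mul_div_assoc, ENNReal.div_self hT0 ENNReal.ofReal_ne_top, mul_one]
    calc picksum P W δ T / ENNReal.ofReal T ≤ (C + C*Bs) + R / ENNReal.ofReal T := hdivle
    _ ≤ C + ε/2 + ε/2 := add_le_add (add_le_add le_rfl hsB.le) hRT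
    _ = C + ε := by rw [add_assoc, ENNReal.add_halves]
end
end

section
/- Fix δ > 0 and suppose ξ_W^δ admits an M3 representation with shape process F_W^δ and constant C_W^δ. Then the restriction W^δ of W to δℤ can be expressed in terms of F_W^δ: for every Borel measurable set L of paths on δℤ, P(W^δ ∈ L) = C_W^δ E[ ∫_{δℤ} 1{ F_W^δ(· + t) − F_W^δ(t) ∈ L } e^{F_W^δ(t)} ν_δ(dt) ], where ν_δ is δ times the counting measure on δℤ. -/
open MeasureTheory Filter Set ProbabilityTheory
open scoped ENNReal NNReal Topology

noncomputable section

/-- The exponential tilting measure `e^{-u} du` on `ℝ`. -/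
def expTilt : Measure ℝ := volume.withDensity fun u => ENNReal.ofReal (Real.exp (-u))

instance : SFinite expTilt := by unfold expTilt; infer_instance

lemma expTilt_Ioi (a : ℝ) :
    expTilt (Set.Ioi a) = ENNReal.ofReal (Real.exp (-a)) := by
  rw [expTilt, withDensity_apply _ measurableSet_Ioi,
    ← ofReal_integral_eq_lintegral_ofReal]
  · rw [integral_exp_neg_Ioi]
  · have hI := exp_neg_integrableOn_Ioi a one_pos
    simp only [neg_one_mul] at hI
    exact hI
  · exact Filter.Eventually.of_forall fun x => (Real.exp_pos _).le

lemma expTilt_exists {n : ℕ} (y x : Fin n → ℝ) :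
    expTilt {u : ℝ | ∃ i, x i < u + y i}
      = ⨆ i, ENNReal.ofReal (Real.exp (y i - x i)) := by
  rcases Nat.eq_zero_or_pos n with h | h
  · subst h
    simp [iSup_of_empty]
  · haveI : Nonempty (Fin n) := ⟨⟨0, h⟩⟩
    obtain ⟨j, hj⟩ := Finite.exists_max fun i => y i - x i
    have hset : {u : ℝ | ∃ i, x i < u + y i} = Set.Ioi (x j - y j) := by
      ext u
      simp only [Set.mem_setOf_eq, Set.mem_Ioi]
      constructor
      · rintro ⟨i, hi⟩; have := hj i; linarith
      · intro hu; exact ⟨j, by linarith⟩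
    rw [hset, expTilt_Ioi, neg_sub]
    refine (le_antisymm (iSup_le fun i => ?_)
      (le_iSup (fun i => ENNReal.ofReal (Real.exp (y i - x i))) j)).symm
    exact ENNReal.ofReal_le_ofReal (Real.exp_le_exp.2 (hj i))

/-- **Theorem 5 (Dȩbicki–Engelke–Hashorva, discrete Engelke et al. representation).**
Let `W` be such that the corresponding max-stable Brown–Resnick process `ξ_W` is stationary and
has càdlàg paths.  Fix `δ > 0` and suppose `ξ_W^δ` admits an M3 representation with shape
process `F = F_W^δ` and constant `C = C_W^δ`.  Then the restriction `W^δ` of `W` to `δℤ`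
(viewed as the process `n ↦ W(δ n)`, `n ∈ ℤ`) can be expressed in terms of `F_W^δ`: for every
Borel measurable set `L` of paths on `δℤ`,
`P(W^δ ∈ L) = C_W^δ · E[ ∫_{δℤ} 1{F_W^δ(· + t) - F_W^δ(t) ∈ L} e^{F_W^δ(t)} ν_δ(dt) ]`,
where `ν_δ` is `δ` times the counting measure on `δℤ`. -/
theorem discrete_m3_path_representation
    {Ω : Type*} [MeasurableSpace Ω] (P : Measure Ω) [IsProbabilityMeasure P]
    (W : Ω → ℝ → ℝ) (hWmeas : Measurable W)
    (hpath : ∀ ω, Cadlag (W ω))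
    (hW0 : ∀ᵐ ω ∂P, W ω 0 = 0)
    (hmarg : ∀ t : ℝ, ∫⁻ ω, expW W ω t ∂P = 1)
    (hstat : BRStationary P W)
    (hxi : ∀ E : Set ℝ, IsCompact E → (∫⁻ ω, ⨆ t ∈ E, expW W ω t ∂P) < ⊤)
    (δ : ℝ) (hδ : 0 < δ)
    {Ω' : Type*} [MeasurableSpace Ω'] (P' : Measure Ω') [IsProbabilityMeasure P']
    (F : Ω' → ℝ → ℝ) (C : ℝ≥0∞)
    (hM3 : M3Rep P P' W F δ C) :
    ∀ L : Set (ℤ → ℝ), MeasurableSet L →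
      P {ω | (fun n : ℤ => W ω (δ * n)) ∈ L}
        = C * ∫⁻ ω', ENNReal.ofReal δ *
            ∑' m : ℤ, Set.indicator L
              (fun _ => ENNReal.ofReal (Real.exp (F ω' (δ * m))))
              (fun n : ℤ => F ω' (δ * (n + m)) - F ω' (δ * m)) ∂P' := by
  intro L hL
  obtain ⟨hF, -, -, -, -, -, hfdd⟩ := hM3
  have hδ' : δ ≠ 0 := hδ.ne'
  -- path maps
  set φ : ℝ × Ω → (ℤ → ℝ) := fun p => fun n : ℤ => p.1 + W p.2 (δ * n) with hφdef
  have hφ : Measurable φ := measurable_pi_iff.2 fun n =>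
    measurable_fst.add (((measurable_pi_apply _).comp hWmeas).comp measurable_snd)
  set ψ : ℤ → ℝ × Ω' → (ℤ → ℝ) :=
    fun m p => fun n : ℤ => p.1 + F p.2 (δ * ((n : ℝ) + (m : ℝ))) with hψdef
  have hψ : ∀ m, Measurable (ψ m) := fun m => measurable_pi_iff.2 fun n =>
    measurable_fst.add (((measurable_pi_apply _).comp hF).comp measurable_snd)
  have hFm : ∀ t : ℝ, Measurable fun ω' => F ω' t := fun t => (measurable_pi_apply t).comp hF
  -- the two measures on path space
  set μW : Measure (ℤ → ℝ) := (expTilt.prod P).map φ with hμWdef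
  set μF : Measure (ℤ → ℝ) :=
    C • ((ENNReal.ofReal δ) • Measure.sum fun m : ℤ => ((expTilt.prod P').map (ψ m))) with hμFdef
  -- measurability of "exists" sets
  have hExm : ∀ {n : ℕ} (s : Fin n → ℤ) (x : Fin n → ℝ),
      MeasurableSet {g : ℤ → ℝ | ∃ i, x i < g (s i)} := by
    intro n s x
    rw [Set.setOf_exists]
    exact MeasurableSet.iUnion fun i => measurableSet_lt measurable_const (measurable_pi_apply _)
  -- lemma A
  have hμW_ex : ∀ (n : ℕ) (s : Fin n → ℤ) (x : Fin n → ℝ),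
      μW {g : ℤ → ℝ | ∃ i, x i < g (s i)}
        = ∫⁻ ω, ⨆ i, ENNReal.ofReal (Real.exp (W ω (δ * s i) - x i)) ∂P := by
    intro n s x
    rw [hμWdef, Measure.map_apply hφ (hExm s x), Measure.prod_apply_symm (hφ (hExm s x))]
    refine lintegral_congr fun ω => ?_
    have hpre : ((fun u => (u, ω)) ⁻¹' (φ ⁻¹' {g : ℤ → ℝ | ∃ i, x i < g (s i)}))
        = {u : ℝ | ∃ i, x i < u + W ω (δ * s i)} := rfl
    rw [hpre, expTilt_exists]
  -- lemma B
  have hμF_ex : ∀ (n : ℕ) (s : Fin n → ℤ) (x : Fin n → ℝ),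
      μF {g : ℤ → ℝ | ∃ i, x i < g (s i)}
        = C * (ENNReal.ofReal δ * ∑' m : ℤ, ∫⁻ ω',
            ⨆ i, ENNReal.ofReal (Real.exp (F ω' (δ * ((s i : ℝ) + (m : ℝ))) - x i)) ∂P') := by
    intro n s x
    rw [hμFdef, Measure.smul_apply, Measure.smul_apply, Measure.sum_apply _ (hExm s x),
      smul_eq_mul, smul_eq_mul]
    congr 2
    refine tsum_congr fun m => ?_
    rw [Measure.map_apply (hψ m) (hExm s x), Measure.prod_apply_symm ((hψ m) (hExm s x))]
    refine lintegral_congr fun ω' => ?_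
    have hpre : ((fun u => (u, ω')) ⁻¹' ((ψ m) ⁻¹' {g : ℤ → ℝ | ∃ i, x i < g (s i)}))
        = {u : ℝ | ∃ i, x i < u + F ω' (δ * ((s i : ℝ) + (m : ℝ)))} := rfl
    rw [hpre, expTilt_exists]

  -- grid membership
  have hgridmem : ∀ z : ℤ, (δ * z : ℝ) ∈ grid δ := fun z => by
    simp only [grid, if_neg hδ']; exact ⟨z, rfl⟩
  -- lattice measure integration
  have hlatt : ∀ f : ℝ → ℝ≥0∞,
      (∫⁻ r, f r ∂(latticeMeasure δ)) = ENNReal.ofReal δ * ∑' k : ℤ, f (δ * k) := by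
    intro f
    rw [latticeMeasure, if_neg hδ', lintegral_smul_measure, lintegral_sum_measure]
    congr 1
    exact tsum_congr fun k => lintegral_dirac _ f
  -- measurability of suprema integrands
  have hsupmeas : ∀ (n : ℕ) (t : Fin n → ℝ) (x : Fin n → ℝ),
      Measurable fun ω' => ⨆ i, ENNReal.ofReal (Real.exp (F ω' (t i) - x i)) :=
    fun n t x => Measurable.iSup fun i =>
      ENNReal.measurable_ofReal.comp (Real.measurable_exp.comp ((hFm (t i)).sub measurable_const))
  -- the key equality on "exists" sets
  have key : ∀ (n : ℕ) (s : Fin n → ℤ) (x : Fin n → ℝ),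
      μW {g : ℤ → ℝ | ∃ i, x i < g (s i)} = μF {g : ℤ → ℝ | ∃ i, x i < g (s i)} := by
    intro n s x
    rw [hμW_ex, hμF_ex, hfdd n (fun i => δ * s i) x (fun i => hgridmem (s i))]
    congr 1
    calc ∫⁻ ω', ∫⁻ r, ⨆ i, ENNReal.ofReal (Real.exp (F ω' (δ * s i - r) - x i))
            ∂(latticeMeasure δ) ∂P'
        = ∫⁻ ω', ENNReal.ofReal δ * ∑' m : ℤ,
            ⨆ i, ENNReal.ofReal (Real.exp (F ω' (δ * ((s i : ℝ) + (m : ℝ))) - x i)) ∂P' := by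
          refine lintegral_congr fun ω' => ?_
          rw [hlatt]
          congr 1
          have hre : ∀ k : ℤ,
              (⨆ i, ENNReal.ofReal (Real.exp (F ω' (δ * s i - δ * k) - x i)))
                = ⨆ i, ENNReal.ofReal
                    (Real.exp (F ω' (δ * ((s i : ℝ) + ((-k : ℤ) : ℝ))) - x i)) := by
            intro k
            refine iSup_congr fun i => ?_
            rw [show (δ * s i - δ * k : ℝ) = δ * ((s i : ℝ) + ((-k : ℤ) : ℝ)) by push_cast; ring]
          calc (∑' k : ℤ, ⨆ i, ENNReal.ofReal (Real.exp (F ω' (δ * s i - δ * k) - x i)))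
              = ∑' k : ℤ, ⨆ i, ENNReal.ofReal
                  (Real.exp (F ω' (δ * ((s i : ℝ) + (((Equiv.neg ℤ) k : ℤ) : ℝ))) - x i)) :=
                tsum_congr hre
            _ = ∑' m : ℤ, ⨆ i, ENNReal.ofReal
                  (Real.exp (F ω' (δ * ((s i : ℝ) + (m : ℝ))) - x i)) :=
                Equiv.tsum_eq (Equiv.neg ℤ) (fun m : ℤ => ⨆ i, ENNReal.ofReal
                  (Real.exp (F ω' (δ * ((s i : ℝ) + (m : ℝ))) - x i)))
      _ = ENNReal.ofReal δ * ∑' m : ℤ, ∫⁻ ω',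
            ⨆ i, ENNReal.ofReal (Real.exp (F ω' (δ * ((s i : ℝ) + (m : ℝ))) - x i)) ∂P' := by
          rw [lintegral_const_mul' _ _ ENNReal.ofReal_ne_top]
          congr 1
          exact lintegral_tsum fun m =>
            (hsupmeas n (fun i => δ * ((s i : ℝ) + (m : ℝ))) x).aemeasurable
  -- finiteness on "exists" sets
  have hfin : ∀ (n : ℕ) (s : Fin n → ℤ) (x : Fin n → ℝ),
      μW {g : ℤ → ℝ | ∃ i, x i < g (s i)} ≠ ⊤ := by
    intro n s x
    rw [hμW_ex]
    have hb : (∫⁻ ω, ⨆ i, ENNReal.ofReal (Real.exp (W ω (δ * s i) - x i)) ∂P)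
        ≤ ∑ i : Fin n, ENNReal.ofReal (Real.exp (-x i)) := by
      calc (∫⁻ ω, ⨆ i, ENNReal.ofReal (Real.exp (W ω (δ * s i) - x i)) ∂P)
          ≤ ∫⁻ ω, ∑ i : Fin n, ENNReal.ofReal (Real.exp (W ω (δ * s i) - x i)) ∂P :=
            lintegral_mono fun ω => iSup_le fun i =>
              Finset.single_le_sum
                (f := fun i => ENNReal.ofReal (Real.exp (W ω (δ * (s i : ℝ)) - x i)))
                (fun _ _ => by positivity) (Finset.mem_univ i)
        _ = ∑ i : Fin n, ∫⁻ ω, ENNReal.ofReal (Real.exp (W ω (δ * s i) - x i)) ∂P :=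
            lintegral_finset_sum _ fun i _ =>
              ENNReal.measurable_ofReal.comp (Real.measurable_exp.comp
                ((((measurable_pi_apply _).comp hWmeas)).sub measurable_const))
        _ = ∑ i : Fin n, ENNReal.ofReal (Real.exp (-x i)) := by
            refine Finset.sum_congr rfl fun i _ => ?_
            have hrw : ∀ ω, ENNReal.ofReal (Real.exp (W ω (δ * s i) - x i))
                = ENNReal.ofReal (Real.exp (-x i)) * expW W ω (δ * s i) := by
              intro ω
              rw [expW, ← ENNReal.ofReal_mul (Real.exp_pos _).le, ← Real.exp_add]
              ring_nf
            simp_rw [hrw]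
            rw [lintegral_const_mul' _ _ ENNReal.ofReal_ne_top, hmarg, mul_one]
    exact (lt_of_le_of_lt hb (by
      exact ENNReal.sum_lt_top.2 fun i _ => ENNReal.ofReal_lt_top)).ne

  -- the generating π-system
  set S : Set (Set (ℤ → ℝ)) :=
    {A | ∃ (a : ℝ) (n : ℕ) (s : Fin n → ℤ) (c : Fin n → ℝ),
      A = {g : ℤ → ℝ | a < g 0 ∧ ∀ i, g (s i) ≤ c i}} with hSdef
  have hSmeas : ∀ A ∈ S, MeasurableSet A := by
    rintro A ⟨a, n, s, c, rfl⟩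
    have hsplit : {g : ℤ → ℝ | a < g 0 ∧ ∀ i, g (s i) ≤ c i}
        = {g : ℤ → ℝ | a < g 0} ∩ ⋂ i, {g : ℤ → ℝ | g (s i) ≤ c i} := by
      ext g; simp [Set.mem_iInter]
    rw [hsplit]
    exact (measurableSet_lt measurable_const (measurable_pi_apply 0)).inter
      (MeasurableSet.iInter fun i => measurableSet_le (measurable_pi_apply _) measurable_const)
  have hPi : IsPiSystem S := by
    rintro A ⟨a, n, s, c, rfl⟩ B ⟨a', n', s', c', rfl⟩ -
    refine ⟨max a a', n + n', Fin.append s s', Fin.append c c', ?_⟩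
    ext g
    simp only [Set.mem_inter_iff, Set.mem_setOf_eq, max_lt_iff]
    constructor
    · rintro ⟨⟨h1, h2⟩, h3, h4⟩
      refine ⟨⟨h1, h3⟩, fun i => ?_⟩
      refine Fin.addCases (fun j => ?_) (fun j => ?_) i
      · rw [Fin.append_left, Fin.append_left]; exact h2 j
      · rw [Fin.append_right, Fin.append_right]; exact h4 j
    · rintro ⟨⟨h1, h3⟩, h⟩
      refine ⟨⟨h1, fun j => ?_⟩, h3, fun j => ?_⟩
      · have := h (Fin.castAdd n' j)
        rwa [Fin.append_left, Fin.append_left] at this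
      · have := h (Fin.natAdd n j)
        rwa [Fin.append_right, Fin.append_right] at this
  -- S generates the product σ-algebra
  have hIic : ∀ (j : ℤ) (c : ℝ),
      MeasurableSet[MeasurableSpace.generateFrom S] {g : ℤ → ℝ | g j ≤ c} := by
    intro j c
    have : {g : ℤ → ℝ | g j ≤ c}
        = ⋃ k : ℕ, {g : ℤ → ℝ | -(k : ℝ) < g 0 ∧
            ∀ i : Fin 1, g ((fun _ => j) i) ≤ (fun _ => c) i} := by
      ext g
      simp only [Set.mem_setOf_eq, Set.mem_iUnion]
      constructor
      · intro hg
        obtain ⟨k, hk⟩ := exists_nat_gt (-(g 0))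
        exact ⟨k, by linarith, fun _ => hg⟩
      · rintro ⟨k, _, h⟩
        exact h 0
    rw [this]
    exact MeasurableSet.iUnion fun k =>
      MeasurableSpace.measurableSet_generateFrom ⟨-(k : ℝ), 1, _, _, rfl⟩
  have hgen : (MeasurableSpace.pi : MeasurableSpace (ℤ → ℝ))
      = MeasurableSpace.generateFrom S := by
    refine le_antisymm ?_ (MeasurableSpace.generateFrom_le hSmeas)
    refine iSup_le fun j => ?_
    have hinst : (Real.measurableSpace : MeasurableSpace ℝ)
        = MeasurableSpace.generateFrom (Set.range Set.Iic) :=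
      (BorelSpace.measurable_eq (α := ℝ)).trans (borel_eq_generateFrom_Iic ℝ)
    have hmeas' : @Measurable _ _ (MeasurableSpace.generateFrom S)
        (MeasurableSpace.generateFrom (Set.range Set.Iic)) (fun g : ℤ → ℝ => g j) :=
      @measurable_generateFrom (ℤ → ℝ) ℝ (MeasurableSpace.generateFrom S)
        (Set.range Set.Iic) (fun g : ℤ → ℝ => g j)
        (by rintro t ⟨c, rfl⟩; exact hIic j c)
    show MeasurableSpace.comap (fun g : ℤ → ℝ => g j) Real.measurableSpace
      ≤ MeasurableSpace.generateFrom S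
    rw [hinst]
    exact measurable_iff_comap_le.mp hmeas'
  -- the covering family
  set T : Set (Set (ℤ → ℝ)) :=
    Set.range (fun k : ℕ => {g : ℤ → ℝ | -(k : ℝ) < g 0 ∧
      ∀ i : Fin 0, g (Fin.elim0 i) ≤ Fin.elim0 i}) with hTdef
  have hTsub : T ⊆ S := by
    rintro A ⟨k, rfl⟩
    exact ⟨-(k : ℝ), 0, Fin.elim0, Fin.elim0, rfl⟩
  have hTc : T.Countable := Set.countable_range _
  have hTuniv : ⋃₀ T = Set.univ := by
    refine Set.eq_univ_of_forall fun g => ?_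
    obtain ⟨k, hk⟩ := exists_nat_gt (-(g 0))
    exact ⟨_, ⟨k, rfl⟩, ⟨by linarith, fun i => i.elim0⟩⟩
  have hBk_eq : ∀ k : ℕ, {g : ℤ → ℝ | -(k : ℝ) < g 0 ∧
      ∀ i : Fin 0, g (Fin.elim0 i) ≤ Fin.elim0 i}
      = {g : ℤ → ℝ | ∃ i : Fin 1, (fun _ => -(k : ℝ)) i < g ((fun _ => (0 : ℤ)) i)} := by
    intro k
    ext g
    simp only [Set.mem_setOf_eq]
    constructor
    · rintro ⟨h, -⟩; exact ⟨0, h⟩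
    · rintro ⟨i, h⟩; exact ⟨h, fun i => i.elim0⟩
  have hTtop : ∀ A ∈ T, μW A ≠ ⊤ := by
    rintro A ⟨k, rfl⟩
    show μW {g : ℤ → ℝ | -(k : ℝ) < g 0 ∧ ∀ i : Fin 0, g (Fin.elim0 i) ≤ Fin.elim0 i} ≠ ⊤
    rw [hBk_eq k]
    exact hfin 1 _ _
  -- equality on the π-system, by inclusion-exclusion
  have h_eq : ∀ A ∈ S, μW A = μF A := by
    rintro A ⟨a, n, s, c, rfl⟩
    set B : Set (ℤ → ℝ) :=
      {g : ℤ → ℝ | ∃ i : Fin 1, (fun _ => a) i < g ((fun _ => (0 : ℤ)) i)} with hBdef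
    set D : Set (ℤ → ℝ) := {g : ℤ → ℝ | ∃ i, c i < g (s i)} with hDdef
    have hBm : MeasurableSet B := hExm _ _
    have hDm : MeasurableSet D := hExm _ _
    have hUeq : {g : ℤ → ℝ | ∃ i : Fin (n + 1),
        Fin.cons (α := fun _ => ℝ) a c i
          < g (Fin.cons (α := fun _ => ℤ) 0 s i)} = B ∪ D := by
      ext g
      simp only [Set.mem_union, Set.mem_setOf_eq, hBdef, hDdef]
      constructor
      · rintro ⟨i, hi⟩
        induction i using Fin.cases with
        | zero => exact Or.inl ⟨0, by simpa using hi⟩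
        | succ j => exact Or.inr ⟨j, by simpa using hi⟩
      · rintro (⟨i, hi⟩ | ⟨j, hj⟩)
        · exact ⟨0, by simpa using hi⟩
        · exact ⟨j.succ, by simpa using hj⟩
    have hAeq : {g : ℤ → ℝ | a < g 0 ∧ ∀ i, g (s i) ≤ c i} = B \ D := by
      ext g
      simp only [Set.mem_diff, Set.mem_setOf_eq, hBdef, hDdef, not_exists, not_lt]
      constructor
      · rintro ⟨h1, h2⟩; exact ⟨⟨0, h1⟩, h2⟩
      · rintro ⟨⟨i, h1⟩, h2⟩; exact ⟨h1, h2⟩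
    have e1 : μW (B ∪ D) = μF (B ∪ D) := by rw [← hUeq]; exact key _ _ _
    have e2 : μW B = μF B := key _ _ _
    have e3 : μW D = μF D := key _ _ _
    have fU : μW (B ∪ D) ≠ ⊤ := by rw [← hUeq]; exact hfin _ _ _
    have fB : μW B ≠ ⊤ := hfin _ _ _
    have hinter : μW (B ∩ D) = μF (B ∩ D) := by
      have hc : μW (B ∪ D) + μW (B ∩ D) = μW (B ∪ D) + μF (B ∩ D) := by
        calc μW (B ∪ D) + μW (B ∩ D) = μW B + μW D := measure_union_add_inter B hDm
          _ = μF B + μF D := by rw [e2, e3]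
          _ = μF (B ∪ D) + μF (B ∩ D) := (measure_union_add_inter B hDm).symm
          _ = μW (B ∪ D) + μF (B ∩ D) := by rw [e1]
      exact (ENNReal.add_right_inj fU).1 hc
    have finter : μW (B ∩ D) ≠ ⊤ :=
      ne_top_of_le_ne_top fB (measure_mono Set.inter_subset_left)
    have hdiff : μW (B \ D) = μF (B \ D) := by
      have hc : μW (B ∩ D) + μW (B \ D) = μW (B ∩ D) + μF (B \ D) := by
        calc μW (B ∩ D) + μW (B \ D) = μW B := measure_inter_add_diff B hDm
          _ = μF B := e2
          _ = μF (B ∩ D) + μF (B \ D) := (measure_inter_add_diff B hDm).symm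
          _ = μW (B ∩ D) + μF (B \ D) := by rw [hinter]
      exact (ENNReal.add_right_inj finter).1 hc
    rw [hAeq]
    exact hdiff
  -- the two measures coincide
  have hμeq : μW = μF :=
    MeasureTheory.Measure.ext_of_generateFrom_of_cover_subset hgen hPi hTsub hTc hTuniv hTtop h_eq

  -- the path set encoding `L`
  set AL : Set (ℤ → ℝ) := {g : ℤ → ℝ | 0 < g 0 ∧ (fun n : ℤ => g n - g 0) ∈ L} with hALdef
  have hGm : Measurable fun g : ℤ → ℝ => (fun n : ℤ => g n - g 0) :=
    measurable_pi_iff.2 fun n => (measurable_pi_apply n).sub (measurable_pi_apply 0)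
  have hALm : MeasurableSet AL := by
    have : AL = {g : ℤ → ℝ | 0 < g 0}
        ∩ ((fun g : ℤ → ℝ => (fun n : ℤ => g n - g 0)) ⁻¹' L) := by
      ext g; simp [hALdef, Set.mem_preimage]
    rw [this]
    exact (measurableSet_lt measurable_const (measurable_pi_apply 0)).inter (hGm hL)
  -- left-hand side
  have hWδ : Measurable fun ω => (fun n : ℤ => W ω (δ * n)) :=
    measurable_pi_iff.2 fun n => (measurable_pi_apply _).comp hWmeas
  have hLHS : μW AL = P {ω | (fun n : ℤ => W ω (δ * n)) ∈ L} := by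
    rw [hμWdef, Measure.map_apply hφ hALm, Measure.prod_apply_symm (hφ hALm)]
    have hae : (fun ω => expTilt ((fun u => (u, ω)) ⁻¹' (φ ⁻¹' AL)))
        =ᵐ[P] fun ω => Set.indicator ((fun ω' => fun n : ℤ => W ω' (δ * n)) ⁻¹' L)
          (1 : Ω → ℝ≥0∞) ω := by
      filter_upwards [hW0] with ω hω0
      have hpre : ((fun u => (u, ω)) ⁻¹' (φ ⁻¹' AL))
          = {u : ℝ | 0 < u ∧ (fun n : ℤ => W ω (δ * n)) ∈ L} := by
        ext u
        simp only [Set.mem_preimage, hφdef, hALdef, Set.mem_setOf_eq, Int.cast_zero,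
          mul_zero, hω0, add_zero, add_sub_cancel_left]
      rw [hpre]
      by_cases hmem : (fun n : ℤ => W ω (δ * n)) ∈ L
      · have hIoi : {u : ℝ | 0 < u ∧ (fun n : ℤ => W ω (δ * n)) ∈ L} = Set.Ioi 0 := by
          ext u; simp [hmem]
        rw [hIoi, expTilt_Ioi]
        simp [Set.indicator, hmem]
      · have hemp : {u : ℝ | 0 < u ∧ (fun n : ℤ => W ω (δ * n)) ∈ L} = ∅ := by
          ext u; simp [hmem]
        rw [hemp]
        simp [Set.indicator, hmem]
    rw [lintegral_congr_ae hae, lintegral_indicator_one (hWδ hL)]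
    rfl
  -- right-hand side
  have hterm : ∀ m : ℤ, ((expTilt.prod P').map (ψ m)) AL
      = ∫⁻ ω', Set.indicator L
          (fun _ => ENNReal.ofReal (Real.exp (F ω' (δ * m))))
          (fun n : ℤ => F ω' (δ * (n + m)) - F ω' (δ * m)) ∂P' := by
    intro m
    rw [Measure.map_apply (hψ m) hALm, Measure.prod_apply_symm ((hψ m) hALm)]
    refine lintegral_congr fun ω' => ?_
    have hpre : ((fun u => (u, ω')) ⁻¹' ((ψ m) ⁻¹' AL))
        = {u : ℝ | 0 < u + F ω' (δ * m) ∧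
            (fun n : ℤ => F ω' (δ * (n + m)) - F ω' (δ * m)) ∈ L} := by
      ext u
      simp only [Set.mem_preimage, hψdef, hALdef, Set.mem_setOf_eq, Int.cast_zero,
        zero_add, add_sub_add_left_eq_sub]
    rw [hpre]
    by_cases hmem : (fun n : ℤ => F ω' (δ * (n + m)) - F ω' (δ * m)) ∈ L
    · have hIoi : {u : ℝ | 0 < u + F ω' (δ * m) ∧
          (fun n : ℤ => F ω' (δ * (n + m)) - F ω' (δ * m)) ∈ L}
          = Set.Ioi (-(F ω' (δ * m))) := by
        ext u
        simp only [Set.mem_setOf_eq, hmem, and_true, Set.mem_Ioi]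
        constructor <;> intro h <;> linarith
      rw [hIoi, expTilt_Ioi, neg_neg, Set.indicator_of_mem hmem]
    · have hemp : {u : ℝ | 0 < u + F ω' (δ * m) ∧
          (fun n : ℤ => F ω' (δ * (n + m)) - F ω' (δ * m)) ∈ L} = ∅ := by
        ext u; simp [hmem]
      rw [hemp, Set.indicator_of_notMem hmem]
      simp
  have hindmeas : ∀ m : ℤ, Measurable fun ω' => Set.indicator L
      (fun _ => ENNReal.ofReal (Real.exp (F ω' (δ * m))))
      (fun n : ℤ => F ω' (δ * (n + m)) - F ω' (δ * m)) := by
    intro m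
    have hrw : (fun ω' => Set.indicator L
        (fun _ => ENNReal.ofReal (Real.exp (F ω' (δ * m))))
        (fun n : ℤ => F ω' (δ * (n + m)) - F ω' (δ * m)))
        = fun ω' => Set.indicator
            ((fun ω' => (fun n : ℤ => F ω' (δ * (n + m)) - F ω' (δ * m))) ⁻¹' L)
            (fun ω' => ENNReal.ofReal (Real.exp (F ω' (δ * m)))) ω' := by
      funext ω'
      by_cases h : (fun n : ℤ => F ω' (δ * (n + m)) - F ω' (δ * m)) ∈ L
      · rw [Set.indicator_of_mem h, Set.indicator_of_mem (by exact h)]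
      · rw [Set.indicator_of_notMem h, Set.indicator_of_notMem (by exact h)]
    rw [hrw]
    have hGm' : Measurable fun ω' => (fun n : ℤ => F ω' (δ * (n + m)) - F ω' (δ * m)) :=
      measurable_pi_iff.2 fun n => (hFm _).sub (hFm _)
    exact Measurable.indicator
      (ENNReal.measurable_ofReal.comp (Real.measurable_exp.comp (hFm _))) (hGm' hL)
  have hRHS : μF AL = C * ∫⁻ ω', ENNReal.ofReal δ *
      ∑' m : ℤ, Set.indicator L
        (fun _ => ENNReal.ofReal (Real.exp (F ω' (δ * m))))
        (fun n : ℤ => F ω' (δ * (n + m)) - F ω' (δ * m)) ∂P' := by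
    rw [hμFdef, Measure.smul_apply, Measure.smul_apply, Measure.sum_apply _ hALm,
      smul_eq_mul, smul_eq_mul]
    congr 1
    rw [lintegral_const_mul' _ _ ENNReal.ofReal_ne_top]
    congr 1
    rw [lintegral_tsum fun m => (hindmeas m).aemeasurable]
    exact tsum_congr hterm
  rw [← hLHS, hμeq, hRHS]
end
end

section
/- For every λ > 0 and every ε > 0 there exists J such that for all integers j ≥ J: sup_{s ∈ [j, j+1)} |σ²(s) − σ²(λ⌊s/λ⌋)| ≤ (1 − c + ε) ℓ(j + 1). -/
open Filter Set
open scoped Topology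

/-- **Bound on the discretization error `κ_λ(j)` (proof of Theorem 2).**
Let `ℓ : [0,∞) → [0,∞)` be ultimately monotone non-decreasing with
`lim_{t→∞} ℓ(t)/ℓ(t+k) = 1` for every `k ∈ ℕ`, let `c ∈ (0,1]`, and let `σ²` satisfy
`c ℓ(t) ≤ σ²(t) ≤ ℓ(t)` for all sufficiently large `t`.  Then for every `λ > 0` and every
`ε > 0` there exists `J` such that for all integers `j ≥ J`:
`sup_{s ∈ [j, j+1)} |σ²(s) - σ²(λ⌊s/λ⌋)| ≤ (1 - c + ε) ℓ(j + 1)`. -/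
theorem discretization_error_bound
    (ℓ σsq : ℝ → ℝ) (c : ℝ) (hc0 : 0 < c) (hc1 : c ≤ 1)
    (hℓnonneg : ∀ t : ℝ, 0 ≤ t → 0 ≤ ℓ t)
    (hℓmono : ∃ t₀ : ℝ, 0 ≤ t₀ ∧ MonotoneOn ℓ (Set.Ici t₀))
    (hℓratio : ∀ k : ℕ, Tendsto (fun t : ℝ => ℓ t / ℓ (t + (k : ℝ))) atTop (𝓝 1))
    (hσnonneg : ∀ t : ℝ, 0 ≤ t → 0 ≤ σsq t)
    (hsandwich : ∀ᶠ t : ℝ in atTop, c * ℓ t ≤ σsq t ∧ σsq t ≤ ℓ t) :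
    ∀ lam : ℝ, 0 < lam → ∀ ε : ℝ, 0 < ε →
      ∃ J : ℕ, ∀ j : ℕ, J ≤ j →
        ∀ s ∈ Set.Ico (j : ℝ) ((j : ℝ) + 1),
          |σsq s - σsq (lam * (⌊s / lam⌋ : ℝ))| ≤ (1 - c + ε) * ℓ ((j : ℝ) + 1) := by

  obtain ⟨t₀, ht₀0, hmono⟩ := hℓmono
  intro lam hlam ε hε
  set δ : ℝ := min (ε / c) (1/2) with hδdef
  have hδpos : 0 < δ := lt_min (div_pos hε hc0) (by norm_num)
  have hδhalf : δ ≤ 1/2 := min_le_right _ _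
  have hδlt : 1 - δ < 1 := by linarith
  have hcδ : c * δ ≤ ε := by
    have h1 : δ ≤ ε / c := min_le_left _ _
    have h2 : c * δ ≤ c * (ε / c) := by nlinarith
    have h3 : c * (ε / c) = ε := by field_simp
    linarith
  set k : ℕ := ⌈lam⌉₊ + 1 with hk
  have hklam : lam + 1 ≤ (k : ℝ) := by
    have := Nat.le_ceil lam
    push_cast [hk]; linarith
  have hratio := (hℓratio k).eventually (eventually_gt_nhds hδlt)
  obtain ⟨T₂, hT₂⟩ := eventually_atTop.1 hratio
  obtain ⟨T₁, hT₁⟩ := eventually_atTop.1 hsandwich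
  obtain ⟨J, hJ⟩ : ∃ J : ℕ, max (max t₀ T₁) (max T₂ 0) + (k : ℝ) ≤ (J : ℝ) :=
    exists_nat_ge _
  refine ⟨J, fun j hj s hs => ?_⟩
  have hjJ : (J : ℝ) ≤ (j : ℝ) := Nat.cast_le.2 hj
  set b : ℝ := (j : ℝ) + 1 - (k : ℝ) with hb
  have hbM : max (max t₀ T₁) (max T₂ 0) + 1 ≤ b := by
    simp only [hb]; linarith
  have hbt₀ : t₀ ≤ b := by
    have := le_max_left (max t₀ T₁) (max T₂ 0)
    have := le_max_left t₀ T₁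
    linarith [le_trans (le_max_left t₀ T₁) (le_max_left (max t₀ T₁) (max T₂ 0))]
  have hbT₁ : T₁ ≤ b := by
    linarith [le_trans (le_max_right t₀ T₁) (le_max_left (max t₀ T₁) (max T₂ 0))]
  have hbT₂ : T₂ ≤ b := by
    linarith [le_trans (le_max_left T₂ 0) (le_max_right (max t₀ T₁) (max T₂ 0))]
  have hb0 : (0:ℝ) ≤ b := by
    linarith [le_trans (le_max_right T₂ 0) (le_max_right (max t₀ T₁) (max T₂ 0))]
  set u : ℝ := lam * (⌊s / lam⌋ : ℝ) with hu
  have hus : u ≤ s := by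
    have h1 : (⌊s / lam⌋ : ℝ) ≤ s / lam := Int.floor_le _
    have h2 : lam * (⌊s / lam⌋ : ℝ) ≤ lam * (s / lam) :=
      mul_le_mul_of_nonneg_left h1 hlam.le
    rwa [mul_div_cancel₀ _ (ne_of_gt hlam)] at h2
  have husl : s - lam < u := by
    have h1 : s / lam < (⌊s / lam⌋ : ℝ) + 1 := Int.lt_floor_add_one _
    have h2 : lam * (s / lam) < lam * ((⌊s / lam⌋ : ℝ) + 1) :=
      mul_lt_mul_of_pos_left h1 hlam
    rw [mul_div_cancel₀ _ (ne_of_gt hlam)] at h2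
    simp only [hu]; nlinarith
  have hjs : (j : ℝ) ≤ s := hs.1
  have hsj1 : s < (j : ℝ) + 1 := hs.2
  have hk1 : (1:ℝ) ≤ (k : ℝ) := by linarith
  have hbu : b ≤ u := by simp only [hb]; linarith
  have hbs : b ≤ s := by linarith
  -- sandwich
  have hss := hT₁ s (le_trans hbT₁ hbs)
  have hsu := hT₁ u (le_trans hbT₁ hbu)
  -- monotone facts
  have hmb : b ∈ Set.Ici t₀ := hbt₀
  have hmu : u ∈ Set.Ici t₀ := le_trans hbt₀ hbu
  have hms : s ∈ Set.Ici t₀ := le_trans hbt₀ hbs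
  have hmj1 : (j : ℝ) + 1 ∈ Set.Ici t₀ := le_trans hbt₀ (by simp only [hb]; linarith)
  set L : ℝ := ℓ ((j : ℝ) + 1) with hL
  have hsL : ℓ s ≤ L := hmono hms hmj1 (by linarith)
  have huL : ℓ u ≤ L := hmono hmu hmj1 (by linarith)
  have hbsℓ : ℓ b ≤ ℓ s := hmono hmb hms hbs
  have hbuℓ : ℓ b ≤ ℓ u := hmono hmb hmu hbu
  have hLnn : 0 ≤ L := hℓnonneg _ (by positivity)
  -- ratio at b
  have hrb := hT₂ b hbT₂
  have hbk : b + (k : ℝ) = (j : ℝ) + 1 := by simp only [hb]; ring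
  rw [hbk] at hrb
  have hLpos : 0 < L := by
    rcases hLnn.lt_or_eq with h | h
    · exact h
    · exfalso; rw [← hL, ← h] at hrb; simp at hrb; linarith
  have hbL : (1 - δ) * L ≤ ℓ b := by
    have h := (lt_div_iff₀ hLpos).1 hrb
    linarith
  -- final
  have key1 : c * ((1 - δ) * L) ≤ c * ℓ u :=
    mul_le_mul_of_nonneg_left (le_trans hbL hbuℓ) hc0.le
  have key2 : c * ((1 - δ) * L) ≤ c * ℓ s :=
    mul_le_mul_of_nonneg_left (le_trans hbL hbsℓ) hc0.le
  have key3 : c * δ * L ≤ ε * L := mul_le_mul_of_nonneg_right hcδ hLnn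
  rw [abs_sub_le_iff]
  constructor
  · linarith [hss.2, hsu.1]
  · linarith [hss.1, hsu.2]
end

section
/- Let δ, η ≥ 0 and suppose that lim_{|t|→∞} W(t) = −∞ almost surely and P(S^δ < ∞) = P(S^η < ∞) = 1. Then for every u ∈ (0,1), as T → ∞, the ratio R_{u,T}^{δ,η} = (sup_{s ∈ δℤ ∩ [−uT, (1−u)T]} e^{W(s)}) / (η ∑_{s ∈ ηℤ ∩ [−uT, (1−u)T]} e^{W(s)}) (with the sum replaced by the integral ∫_{−uT}^{(1−u)T} e^{W(s)} ds when η = 0) converges almost surely to M^δ / S^η, which lies in (0, ∞) almost surely. -/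
open MeasureTheory Filter Set ProbabilityTheory
open scoped ENNReal NNReal Topology

noncomputable section

/-- `S^η` restricted to a window `A ⊆ ℝ`: `η ∑_{t ∈ ηℤ ∩ A} e^{W(t)}` for `η > 0` and
`∫_A e^{W(t)} dt` for `η = 0`. -/
def SsumOn {Ω : Type*} (W : Ω → ℝ → ℝ) (η : ℝ) (ω : Ω) (A : Set ℝ) : ℝ≥0∞ :=
  if η = 0 then ∫⁻ t in A, expW W ω t
  else ENNReal.ofReal η * ∑' n : ℤ, A.indicator (expW W ω) (η * n)

section AuxLemmas

/-- A càdlàg function is measurable. -/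
lemma cadlag_measurable {f : ℝ → ℝ} (hf : Cadlag f) : Measurable f := by
  have hmeas : ∀ n : ℕ, Measurable (fun t : ℝ => f ((⌈(2:ℝ)^n * t⌉ : ℝ) / 2^n)) := by
    intro n
    have : (fun t : ℝ => f ((⌈(2:ℝ)^n * t⌉ : ℝ) / 2^n)) =
        (fun k : ℤ => f ((k : ℝ) / 2^n)) ∘ (fun t : ℝ => ⌈(2:ℝ)^n * t⌉) := rfl
    rw [this]
    exact measurable_from_top.comp (Int.measurable_ceil.comp (measurable_const_mul _))
  apply measurable_of_tendsto_metrizable hmeas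
  rw [tendsto_pi_nhds]
  intro t
  have hl : ∀ n : ℕ, t ≤ (⌈(2:ℝ)^n * t⌉ : ℝ) / 2^n := by
    intro n
    rw [le_div_iff₀ (by positivity)]
    calc t * 2^n = 2^n * t := mul_comm _ _
    _ ≤ ⌈(2:ℝ)^n * t⌉ := Int.le_ceil _
  have hu : ∀ n : ℕ, (⌈(2:ℝ)^n * t⌉ : ℝ) / 2^n ≤ t + (1/2)^n := by
    intro n
    rw [div_le_iff₀ (by positivity)]
    have h1 : (⌈(2:ℝ)^n * t⌉ : ℝ) < 2^n * t + 1 := Int.ceil_lt_add_one _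
    have h2 : ((1:ℝ)/2)^n * 2^n = 1 := by
      rw [← mul_pow]; norm_num
    nlinarith [h1, h2]
  have htt : Tendsto (fun n : ℕ => (⌈(2:ℝ)^n * t⌉ : ℝ) / 2^n) atTop (𝓝 t) := by
    have hup : Tendsto (fun n : ℕ => t + ((1:ℝ)/2)^n) atTop (𝓝 (t + 0)) :=
      tendsto_const_nhds.add
        (tendsto_pow_atTop_nhds_zero_of_lt_one (by norm_num) (by norm_num))
    rw [add_zero] at hup
    exact tendsto_of_tendsto_of_tendsto_of_le_of_le tendsto_const_nhds hup hl hu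
  have h1 : Tendsto (fun n : ℕ => (⌈(2:ℝ)^n * t⌉ : ℝ) / 2^n) atTop (𝓝[Set.Ici t] t) :=
    tendsto_nhdsWithin_of_tendsto_nhds_of_eventually_within _ htt
      (Eventually.of_forall fun n => hl n)
  exact Tendsto.comp ((hf t).1) h1

/-- A càdlàg function is bounded above on compact intervals. -/
lemma cadlag_bddAbove {f : ℝ → ℝ} (hf : Cadlag f) (a b : ℝ) :
    ∃ C : ℝ, ∀ t ∈ Set.Icc a b, f t ≤ C := by
  have loc : ∀ t : ℝ, ∃ ε, 0 < ε ∧ ∃ C : ℝ, ∀ s ∈ Set.Ioo (t - ε) (t + ε), f s ≤ C := by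
    intro t
    obtain ⟨l, hl⟩ := (hf t).2
    have hr : ∀ᶠ s in 𝓝[Set.Ici t] t, f s < f t + 1 :=
      (hf t).1 (Iio_mem_nhds (lt_add_one (f t)))
    have hlft : ∀ᶠ s in 𝓝[<] t, f s < l + 1 :=
      hl (Iio_mem_nhds (lt_add_one l))
    rw [eventually_nhdsWithin_iff, Metric.eventually_nhds_iff] at hr hlft
    obtain ⟨ε₁, hε₁, h1⟩ := hr
    obtain ⟨ε₂, hε₂, h2⟩ := hlft
    refine ⟨min ε₁ ε₂, lt_min hε₁ hε₂, max (f t + 1) (l + 1), ?_⟩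
    intro s hs
    have hd : dist s t < min ε₁ ε₂ := by
      rw [Real.dist_eq, abs_lt]
      constructor
      · linarith [hs.1]
      · linarith [hs.2]
    rcases le_or_gt t s with h | h
    · exact le_max_of_le_left (h1 (lt_of_lt_of_le hd (min_le_left _ _)) h).le
    · exact le_max_of_le_right (h2 (lt_of_lt_of_le hd (min_le_right _ _)) h).le
  choose ε hε C hC using loc
  have hcover : Set.Icc a b ⊆ ⋃ t ∈ Set.Icc a b, Set.Ioo (t - ε t) (t + ε t) := by
    intro t ht
    exact Set.mem_biUnion ht ⟨by linarith [hε t], by linarith [hε t]⟩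
  obtain ⟨F, hFsub, hFfin, hFcov⟩ :=
    isCompact_Icc.elim_finite_subcover_image (fun t _ => isOpen_Ioo) hcover
  obtain ⟨Cmax, hCmax⟩ := (hFfin.image C).bddAbove
  refine ⟨Cmax, fun t ht => ?_⟩
  obtain ⟨i, hi, hti⟩ := Set.mem_iUnion₂.1 (hFcov ht)
  exact le_trans (hC i t hti) (hCmax (Set.mem_image_of_mem C hi))

lemma iSup_real_eq_iSup_nat {g : ℝ → ℝ≥0∞} (hg : Monotone g) :
    ⨆ T : ℝ, g T = ⨆ n : ℕ, g n := by
  apply le_antisymm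
  · exact iSup_le fun T => le_trans (hg (Nat.le_ceil T)) (le_iSup (fun n : ℕ => g n) ⌈T⌉₊)
  · exact iSup_le fun n => le_iSup g (n : ℝ)

end AuxLemmas

/-- **Almost sure convergence of the ratios `R_{u,T}^{δ,η}` (eq. (22), proof of Theorem 2).**
Let `δ, η ≥ 0` and suppose that `W(t) → -∞` a.s. as `|t| → ∞` and
`P(S^δ < ∞) = P(S^η < ∞) = 1`.  Then for every `u ∈ (0,1)`, almost surely, as `T → ∞` the
ratio `R_{u,T}^{δ,η} = sup_{s ∈ δℤ ∩ [-uT,(1-u)T]} e^{W(s)} / (η ∑_{s ∈ ηℤ ∩ [-uT,(1-u)T]} e^{W(s)})`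
(with the sum replaced by `∫_{-uT}^{(1-u)T} e^{W(s)} ds` when `η = 0`) converges to
`M^δ / S^η`, which lies in `(0, ∞)` almost surely. -/
theorem ratio_converges_to_dieker_yakir
    {Ω : Type*} [MeasurableSpace Ω] (P : Measure Ω) [IsProbabilityMeasure P]
    (W : Ω → ℝ → ℝ) (hWmeas : Measurable W)
    (hpath : ∀ ω, Cadlag (W ω))
    (hW0 : ∀ᵐ ω ∂P, W ω 0 = 0)
    (hmarg : ∀ t : ℝ, ∫⁻ ω, expW W ω t ∂P = 1)
    (hstat : BRStationary P W)
    (δ η : ℝ) (hδ : 0 ≤ δ) (hη : 0 ≤ η)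
    (hdecay : ∀ᵐ ω ∂P, Tendsto (fun t : ℝ => W ω t) (cocompact ℝ) atBot)
    (hSδ : ∀ᵐ ω ∂P, Ssum W δ ω < ⊤)
    (hSη : ∀ᵐ ω ∂P, Ssum W η ω < ⊤) :
    ∀ u : ℝ, u ∈ Set.Ioo (0 : ℝ) 1 →
      ∀ᵐ ω ∂P,
        Tendsto (fun T : ℝ =>
            (⨆ s ∈ grid δ ∩ Set.Icc (-(u * T)) ((1 - u) * T), expW W ω s) /
              SsumOn W η ω (Set.Icc (-(u * T)) ((1 - u) * T)))
          atTop (𝓝 (Msup W δ ω / Ssum W η ω)) ∧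
        0 < Msup W δ ω / Ssum W η ω ∧ Msup W δ ω / Ssum W η ω < ⊤ := by
  intro u hu
  obtain ⟨hu0, hu1⟩ := hu
  have h1u : (0:ℝ) < 1 - u := by linarith
  filter_upwards [hW0, hdecay, hSδ, hSη] with ω hW0ω hdecω hSδω hSηω
  set A : ℝ → Set ℝ := fun T => Set.Icc (-(u * T)) ((1 - u) * T) with hAdef
  -- basic facts about the windows
  have hmono : ∀ {T T' : ℝ}, T ≤ T' → A T ⊆ A T' := by
    intro T T' h
    apply Set.Icc_subset_Icc
    · exact neg_le_neg (mul_le_mul_of_nonneg_left h hu0.le)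
    · exact mul_le_mul_of_nonneg_left h h1u.le
  have hmem : ∀ s T : ℝ, |s| / u + |s| / (1 - u) ≤ T → s ∈ A T := by
    intro s T hT
    have e1 : u * (|s| / u) = |s| := by field_simp
    have e2 : (1 - u) * (|s| / (1 - u)) = |s| := by field_simp
    have hT1 : u * (|s| / u + |s| / (1 - u)) ≤ u * T :=
      mul_le_mul_of_nonneg_left hT hu0.le
    have hT2 : (1 - u) * (|s| / u + |s| / (1 - u)) ≤ (1 - u) * T :=
      mul_le_mul_of_nonneg_left hT h1u.le
    rw [mul_add, e1] at hT1
    rw [mul_add, e2] at hT2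
    have p1 : 0 ≤ u * (|s| / (1 - u)) := by positivity
    have p2 : 0 ≤ (1 - u) * (|s| / u) := by positivity
    refine Set.mem_Icc.2 ⟨?_, ?_⟩
    · linarith [neg_abs_le s]
    · linarith [le_abs_self s]
  have hAmeas : ∀ T : ℝ, MeasurableSet (A T) := fun T => measurableSet_Icc
  -- measurability of the path
  have hfm : Measurable (expW W ω) :=
    ENNReal.measurable_ofReal.comp (Real.measurable_exp.comp (cadlag_measurable (hpath ω)))
  -- basic values
  have h0grid : (0:ℝ) ∈ grid δ := by
    unfold grid
    split_ifs
    · trivial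
    · exact ⟨0, by simp⟩
  have hexp0 : expW W ω 0 = 1 := by simp [expW, hW0ω]
  have hM1 : (1:ℝ≥0∞) ≤ Msup W δ ω := by
    rw [← hexp0]
    exact le_biSup _ h0grid
  have hMne0 : Msup W δ ω ≠ 0 := by
    intro h
    rw [h] at hM1
    simp at hM1
  -- Msup < ⊤
  have hMtop : Msup W δ ω ≠ ⊤ := by
    by_cases hδ0 : δ = 0
    · have hev : ∀ᶠ t in cocompact ℝ, W ω t ≤ 0 := hdecω.eventually_le_atBot 0
      obtain ⟨K, hK, hKsub⟩ := mem_cocompact.1 hev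
      obtain ⟨r, hr⟩ := hK.isBounded.subset_closedBall 0
      obtain ⟨C, hC⟩ := cadlag_bddAbove (hpath ω) (0 - r) (0 + r)
      have hbound : ∀ t, W ω t ≤ max C 0 := by
        intro t
        by_cases ht : t ∈ K
        · have h2 : t ∈ Metric.closedBall (0:ℝ) r := hr ht
          rw [Real.closedBall_eq_Icc] at h2
          exact le_max_of_le_left (hC t h2)
        · exact le_max_of_le_right (hKsub ht)
      have hle : Msup W δ ω ≤ ENNReal.ofReal (Real.exp (max C 0)) := by
        apply iSup₂_le
        intro t _
        exact ENNReal.ofReal_le_ofReal (Real.exp_le_exp.2 (hbound t))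
      exact ne_top_of_le_ne_top ENNReal.ofReal_ne_top hle
    · have hδpos : 0 < δ := lt_of_le_of_ne hδ (Ne.symm hδ0)
      have hδ' : ENNReal.ofReal δ ≠ 0 := by
        simp [ENNReal.ofReal_eq_zero, not_le, hδpos]
      have hsum : ∑' n : ℤ, expW W ω (δ * n) ≠ ⊤ := by
        rw [Ssum, if_neg hδ0] at hSδω
        intro hns
        rw [hns, ENNReal.mul_top hδ'] at hSδω
        exact absurd hSδω (lt_irrefl _)
      apply ne_top_of_le_ne_top hsum
      apply iSup₂_le
      intro t ht
      rw [grid, if_neg hδ0] at ht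
      obtain ⟨n, rfl⟩ := ht
      exact ENNReal.le_tsum n
  -- Ssum ∈ (0, ∞)
  have hStop : Ssum W η ω ≠ ⊤ := hSηω.ne
  have hSne0 : Ssum W η ω ≠ 0 := by
    by_cases hη0 : η = 0
    · rw [Ssum, if_pos hη0]
      have hsupp : Function.support (expW W ω) = Set.univ := by
        ext t
        simp [Function.mem_support, expW, ENNReal.ofReal_eq_zero, not_le, Real.exp_pos]
      refine ((lintegral_pos_iff_support hfm).2 ?_).ne'
      rw [hsupp, Real.volume_univ]
      exact ENNReal.zero_lt_top
    · rw [Ssum, if_neg hη0]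
      have hηpos : 0 < η := lt_of_le_of_ne hη (Ne.symm hη0)
      have h1 : (1:ℝ≥0∞) ≤ ∑' n : ℤ, expW W ω (η * n) := by
        have := ENNReal.le_tsum (f := fun n : ℤ => expW W ω (η * n)) 0
        simpa [hexp0] using this
      apply mul_ne_zero
      · simp [ENNReal.ofReal_eq_zero, not_le, hηpos]
      · intro h
        rw [h] at h1
        simp at h1
  -- convergence of the numerator
  have hGmono : Monotone (fun T : ℝ => ⨆ s ∈ grid δ ∩ A T, expW W ω s) := by
    intro T T' h
    exact biSup_mono fun s hs => ⟨hs.1, hmono h hs.2⟩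
  have hGsup : (⨆ T : ℝ, ⨆ s ∈ grid δ ∩ A T, expW W ω s) = Msup W δ ω := by
    apply le_antisymm
    · exact iSup_le fun T => biSup_mono fun s hs => hs.1
    · apply iSup₂_le
      intro s hs
      have hsA : s ∈ grid δ ∩ A (|s| / u + |s| / (1 - u)) := ⟨hs, hmem s _ le_rfl⟩
      exact le_trans (le_biSup _ hsA)
        (le_iSup (fun T : ℝ => ⨆ s ∈ grid δ ∩ A T, expW W ω s) (|s| / u + |s| / (1 - u)))
  have hGtend : Tendsto (fun T : ℝ => ⨆ s ∈ grid δ ∩ A T, expW W ω s) atTop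
      (𝓝 (Msup W δ ω)) := by
    rw [← hGsup]
    exact tendsto_atTop_iSup hGmono
  -- convergence of the denominator
  have hHmono : Monotone (fun T : ℝ => SsumOn W η ω (A T)) := by
    intro T T' h
    by_cases hη0 : η = 0
    · simp only [SsumOn, if_pos hη0]
      exact lintegral_mono_set (hmono h)
    · simp only [SsumOn, if_neg hη0]
      refine mul_le_mul_right (ENNReal.tsum_le_tsum fun n => ?_) _
      exact Set.indicator_le_indicator_of_subset (hmono h) (fun _ => zero_le) _
  have hHle : ∀ T, SsumOn W η ω (A T) ≤ Ssum W η ω := by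
    intro T
    by_cases hη0 : η = 0
    · simp only [SsumOn, Ssum, if_pos hη0]
      exact setLIntegral_le_lintegral _ _
    · simp only [SsumOn, Ssum, if_neg hη0]
      exact mul_le_mul_right
        (ENNReal.tsum_le_tsum fun n => Set.indicator_le_self _ _ _) _
  have hptw : ∀ t : ℝ, expW W ω t = ⨆ n : ℕ, (A n).indicator (expW W ω) t := by
    intro t
    apply le_antisymm
    · have htA : t ∈ A (⌈|t| / u + |t| / (1 - u)⌉₊ : ℕ) := hmem t _ (Nat.le_ceil _)
      calc expW W ω t = (A (⌈|t| / u + |t| / (1 - u)⌉₊ : ℕ)).indicator (expW W ω) t :=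
            (Set.indicator_of_mem htA _).symm
      _ ≤ ⨆ n : ℕ, (A n).indicator (expW W ω) t := le_iSup (fun n : ℕ => (A n).indicator (expW W ω) t) _
    · exact iSup_le fun n => Set.indicator_le_self _ _ t
  have hindmono : Monotone (fun n : ℕ => (A n).indicator (expW W ω)) := by
    intro n m h t
    exact Set.indicator_le_indicator_of_subset (hmono (Nat.cast_le.2 h))
      (fun _ => zero_le) t
  have hHge : Ssum W η ω ≤ ⨆ T : ℝ, SsumOn W η ω (A T) := by
    have key : Ssum W η ω ≤ ⨆ n : ℕ, SsumOn W η ω (A n) := by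
      by_cases hη0 : η = 0
      · simp only [Ssum, SsumOn, if_pos hη0]
        calc (∫⁻ t, expW W ω t)
            = ∫⁻ t, ⨆ n : ℕ, (A n).indicator (expW W ω) t := by
              exact lintegral_congr hptw
        _ = ⨆ n : ℕ, ∫⁻ t, (A n).indicator (expW W ω) t :=
              lintegral_iSup (fun n => hfm.indicator (hAmeas n)) hindmono
        _ = ⨆ n : ℕ, ∫⁻ t in A (n : ℝ), expW W ω t := by
              simp_rw [lintegral_indicator (hAmeas _)]
        _ ≤ ⨆ n : ℕ, ∫⁻ t in A (n : ℝ), expW W ω t := le_rfl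
      · simp only [Ssum, SsumOn, if_neg hη0]
        rw [← ENNReal.mul_iSup]
        apply mul_le_mul_right
        calc (∑' m : ℤ, expW W ω (η * m))
            = ∑' m : ℤ, ⨆ n : ℕ, (A n).indicator (expW W ω) (η * m) :=
              tsum_congr fun m => hptw (η * m)
        _ = ⨆ n : ℕ, ∑' m : ℤ, (A n).indicator (expW W ω) (η * m) := by
              simp_rw [← lintegral_count]
              exact lintegral_iSup (fun n => measurable_from_top)
                (fun n m h k => hindmono h (η * k))
        _ ≤ ⨆ n : ℕ, ∑' m : ℤ, (A n).indicator (expW W ω) (η * m) := le_rfl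
    refine key.trans (iSup_le fun n => le_iSup (fun T : ℝ => SsumOn W η ω (A T)) (n : ℝ))
  have hHtend : Tendsto (fun T : ℝ => SsumOn W η ω (A T)) atTop (𝓝 (Ssum W η ω)) := by
    have ht := tendsto_atTop_iSup hHmono
    have heq : (⨆ T : ℝ, SsumOn W η ω (A T)) = Ssum W η ω :=
      le_antisymm (iSup_le hHle) hHge
    rwa [heq] at ht
  refine ⟨?_, ?_, ?_⟩
  · exact ENNReal.Tendsto.div hGtend (Or.inl hMne0) hHtend (Or.inl hStop)
  · exact ENNReal.div_pos hMne0 hStop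
  · exact ENNReal.div_lt_top hMtop hSne0
end
end

section
/- Let X be a real-valued, non-degenerate random variable with E[|X|] < ∞ and E[e^X] < ∞, and set Φ(θ) = ln E[e^{θX}] for θ ∈ [0,1] (finite on [0,1] by convexity) and ε = (Φ(1) − E[X])/2. Then ε > 0 and there exists a unique γ ∈ (0,1) such that ln E[e^{γ(X − Φ(1) + ε)}] = 0; equivalently, the convex function θ ↦ Φ(θ) − θΦ(1) + θε vanishes at a unique point γ in (0,1). -/
open MeasureTheory Set

section AuxTilting

variable {Ω : Type*} [MeasurableSpace Ω] {P : Measure Ω} [IsProbabilityMeasure P] {X : Ω → ℝ}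

/-- Integrability of `exp (θ X)` for `θ ∈ [0,1]`. -/
lemma tilting_aux_integrable (hXmeas : Measurable X)
    (hexp : Integrable (fun ω => Real.exp (X ω)) P)
    {θ : ℝ} (hθ : θ ∈ Icc (0 : ℝ) 1) :
    Integrable (fun ω => Real.exp (θ * X ω)) P := by
  have hmeas : AEStronglyMeasurable (fun ω => Real.exp (θ * X ω)) P :=
    (Real.measurable_exp.comp (measurable_const.mul hXmeas)).aestronglyMeasurable
  refine Integrable.mono ((integrable_const (1 : ℝ)).add hexp) hmeas
    (Filter.Eventually.of_forall fun ω => ?_)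
  have h1 : θ * X ω ≤ max 0 (X ω) := by
    rcases le_total (X ω) 0 with h | h
    · have : θ * X ω ≤ 0 := mul_nonpos_iff.2 (Or.inl ⟨hθ.1, h⟩)
      exact le_max_of_le_left this
    · have : θ * X ω ≤ 1 * X ω := mul_le_mul_of_nonneg_right hθ.2 h
      simpa using le_max_of_le_right this
  have h2 : Real.exp (θ * X ω) ≤ 1 + Real.exp (X ω) := by
    calc Real.exp (θ * X ω) ≤ Real.exp (max 0 (X ω)) := Real.exp_le_exp.2 h1
      _ = max (Real.exp 0) (Real.exp (X ω)) := Real.exp_monotone.map_max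
      _ ≤ 1 + Real.exp (X ω) := by
          rw [Real.exp_zero]
          exact max_le (by nlinarith [Real.exp_pos (X ω)]) (by nlinarith [Real.exp_pos (X ω)])
  simp only [Pi.add_apply]
  rw [Real.norm_of_nonneg (Real.exp_pos _).le,
    Real.norm_of_nonneg (by nlinarith [Real.exp_pos (X ω)] : (0:ℝ) ≤ 1 + Real.exp (X ω))]
  exact h2

/-- A three-point inequality for convex functions. -/
lemma tilting_convex_point_le {f : ℝ → ℝ} {s : Set ℝ} (hf : ConvexOn ℝ s f) {x y z : ℝ}
    (hx : x ∈ s) (hz : z ∈ s) (hxy : x < y) (hyz : y < z) :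
    f y ≤ ((z - y) / (z - x)) * f x + ((y - x) / (z - x)) * f z := by
  have hxz : (0 : ℝ) < z - x := by linarith
  have hcomb : ((z - y) / (z - x)) * x + ((y - x) / (z - x)) * z = y := by
    field_simp; ring
  have ha : (0:ℝ) ≤ (z - y) / (z - x) := div_nonneg (by linarith) hxz.le
  have hb : (0:ℝ) ≤ (y - x) / (z - x) := div_nonneg (by linarith) hxz.le
  have hab : (z - y) / (z - x) + (y - x) / (z - x) = 1 := by
    rw [← add_div, div_eq_one_iff_eq hxz.ne']
    ring
  have h := hf.2 hx hz ha hb hab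
  simpa [smul_eq_mul, hcomb] using h

/-- Convexity of the cumulant function on `[0,1]` (via Hölder's inequality). -/
lemma tilting_convexOn_log_mgf (hXmeas : Measurable X)
    (hexp : Integrable (fun ω => Real.exp (X ω)) P) :
    ConvexOn ℝ (Icc (0 : ℝ) 1) (fun θ => Real.log (∫ ω, Real.exp (θ * X ω) ∂P)) := by
  have hm_pos : ∀ {θ : ℝ}, θ ∈ Icc (0 : ℝ) 1 → 0 < ∫ ω, Real.exp (θ * X ω) ∂P := by
    intro θ hθ
    exact ProbabilityTheory.mgf_pos (tilting_aux_integrable hXmeas hexp hθ)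
  refine ⟨convex_Icc 0 1, ?_⟩
  intro a ha b hb t u ht hu htu
  rcases ht.eq_or_lt with rfl | ht'
  · simp only [zero_add] at htu
    subst htu
    simp [smul_eq_mul]
  rcases hu.eq_or_lt with rfl | hu'
  · simp only [add_zero] at htu
    subst htu
    simp [smul_eq_mul]
  simp only [smul_eq_mul]
  have htlt1 : t < 1 := by linarith
  have hult1 : u < 1 := by linarith
  set p : ℝ := 1 / t with hp
  set q : ℝ := 1 / u with hq
  have hpq : Real.HolderConjugate p q := by
    rw [Real.holderConjugate_iff]
    constructor
    · exact one_lt_one_div ht' htlt1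
    · simp only [hp, hq, one_div, inv_inv]
      linarith
  -- membership of the combination
  have hcomb_mem : t * a + u * b ∈ Icc (0 : ℝ) 1 := by
    constructor
    · have := mul_nonneg ht ha.1
      have := mul_nonneg hu hb.1
      linarith
    · have h1 : t * a ≤ t * 1 := mul_le_mul_of_nonneg_left ha.2 ht
      have h2 : u * b ≤ u * 1 := mul_le_mul_of_nonneg_left hb.2 hu
      nlinarith
  -- Memℒp facts
  have hmem : ∀ (w c : ℝ), 0 < w → c ∈ Icc (0 : ℝ) 1 →
      MemLp (fun ω => Real.exp (w * (c * X ω))) (ENNReal.ofReal (1 / w)) P := by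
    intro w c hw hc
    have hne : ENNReal.ofReal (1 / w) ≠ 0 := by
      simp only [ne_eq, ENNReal.ofReal_eq_zero, not_le]
      positivity
    have htop : ENNReal.ofReal (1 / w) ≠ ⊤ := ENNReal.ofReal_ne_top
    have hmeas : AEStronglyMeasurable (fun ω => Real.exp (w * (c * X ω))) P :=
      (Real.measurable_exp.comp (measurable_const.mul (measurable_const.mul hXmeas))).aestronglyMeasurable
    refine (memLp_norm_rpow_iff (q := ENNReal.ofReal (1 / w)) hmeas hne htop).1 ?_
    rw [ENNReal.div_self hne htop, memLp_one_iff_integrable]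
    have heq : (fun ω => ‖Real.exp (w * (c * X ω))‖ ^ (ENNReal.ofReal (1 / w)).toReal)
        = fun ω => Real.exp (c * X ω) := by
      funext ω
      rw [ENNReal.toReal_ofReal (by positivity), Real.norm_of_nonneg (Real.exp_pos _).le,
        ← Real.exp_mul]
      congr 1
      field_simp
    rw [heq]
    exact tilting_aux_integrable hXmeas hexp hc
  have hf := hmem t a ht' ha
  have hg := hmem u b hu' hb
  have hHolder := integral_mul_le_Lp_mul_Lq_of_nonneg (μ := P) hpq
    (f := fun ω => Real.exp (t * (a * X ω))) (g := fun ω => Real.exp (u * (b * X ω)))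
    (Filter.Eventually.of_forall fun ω => (Real.exp_pos _).le)
    (Filter.Eventually.of_forall fun ω => (Real.exp_pos _).le) hf hg
  -- rewrite both sides of Hölder
  have hprod : ∀ ω, Real.exp (t * (a * X ω)) * Real.exp (u * (b * X ω))
      = Real.exp ((t * a + u * b) * X ω) := by
    intro ω; rw [← Real.exp_add]; ring_nf
  have htne : t ≠ 0 := ne_of_gt ht'
  have hune : u ≠ 0 := ne_of_gt hu'
  have hfa : ∀ ω, Real.exp (t * (a * X ω)) ^ p = Real.exp (a * X ω) := by
    intro ω
    rw [← Real.exp_mul]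
    congr 1
    rw [hp, mul_one_div, mul_comm t (a * X ω), mul_div_assoc, div_self htne, mul_one]
  have hgb : ∀ ω, Real.exp (u * (b * X ω)) ^ q = Real.exp (b * X ω) := by
    intro ω
    rw [← Real.exp_mul]
    congr 1
    rw [hq, mul_one_div, mul_comm u (b * X ω), mul_div_assoc, div_self hune, mul_one]
  simp only [hprod, hfa, hgb] at hHolder
  have h1p : 1 / p = t := by rw [hp, one_div_one_div]
  have h1q : 1 / q = u := by rw [hq, one_div_one_div]
  rw [h1p, h1q] at hHolder
  have hma := hm_pos ha
  have hmb := hm_pos hb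
  have hmc := hm_pos hcomb_mem
  calc Real.log (∫ ω, Real.exp ((t * a + u * b) * X ω) ∂P)
      ≤ Real.log ((∫ ω, Real.exp (a * X ω) ∂P) ^ t * (∫ ω, Real.exp (b * X ω) ∂P) ^ u) :=
        Real.log_le_log hmc hHolder
    _ = t * Real.log (∫ ω, Real.exp (a * X ω) ∂P) + u * Real.log (∫ ω, Real.exp (b * X ω) ∂P) := by
        rw [Real.log_mul (Real.rpow_pos_of_pos hma t).ne' (Real.rpow_pos_of_pos hmb u).ne',
          Real.log_rpow hma, Real.log_rpow hmb]

end AuxTilting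

/-- **Existence of the tilting exponent `γ` (proof of Theorem 3).**
Let `X` be a real-valued, non-degenerate random variable with `E|X| < ∞` and `E e^X < ∞`, and
set `Φ(θ) = ln E[e^{θX}]` (finite on `[0,1]` by convexity) and `ε = (Φ(1) - E X)/2`.  Then
`ε > 0` and there exists a unique `γ ∈ (0,1)` such that `ln E[e^{γ(X - Φ(1) + ε)}] = 0`;
equivalently, the convex function `θ ↦ Φ(θ) - θΦ(1) + θε` vanishes at a unique point `γ`
in `(0,1)`. -/
theorem exists_unique_tilting_exponent
    {Ω : Type*} [MeasurableSpace Ω] (P : Measure Ω) [IsProbabilityMeasure P]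
    (X : Ω → ℝ) (hXmeas : Measurable X)
    (hnondeg : ¬ ∃ a : ℝ, ∀ᵐ ω ∂P, X ω = a)
    (hint : Integrable X P)
    (hexp : Integrable (fun ω => Real.exp (X ω)) P)
    (Φ : ℝ → ℝ) (hΦ : ∀ θ : ℝ, Φ θ = Real.log (∫ ω, Real.exp (θ * X ω) ∂P))
    (ε : ℝ) (hε : ε = (Φ 1 - ∫ ω, X ω ∂P) / 2) :
    0 < ε ∧
    (∃! γ : ℝ, γ ∈ Set.Ioo (0 : ℝ) 1 ∧
      Real.log (∫ ω, Real.exp (γ * (X ω - Φ 1 + ε)) ∂P) = 0) ∧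
    (∃! γ : ℝ, γ ∈ Set.Ioo (0 : ℝ) 1 ∧ Φ γ - γ * Φ 1 + γ * ε = 0) := by
  classical
  set EX : ℝ := ∫ ω, X ω ∂P with hEXdef
  set m : ℝ → ℝ := fun θ => ∫ ω, Real.exp (θ * X ω) ∂P with hmdef
  have hm_int : ∀ {θ : ℝ}, θ ∈ Icc (0 : ℝ) 1 → Integrable (fun ω => Real.exp (θ * X ω)) P :=
    fun hθ => tilting_aux_integrable hXmeas hexp hθ
  have hm_pos : ∀ {θ : ℝ}, θ ∈ Icc (0 : ℝ) 1 → 0 < m θ :=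
    fun hθ => ProbabilityTheory.mgf_pos (hm_int hθ)
  have hm0 : m 0 = 1 := by simp [hmdef]
  have hmem1 : (1 : ℝ) ∈ Icc (0 : ℝ) 1 := ⟨zero_le_one, le_rfl⟩
  have hmem0 : (0 : ℝ) ∈ Icc (0 : ℝ) 1 := ⟨le_rfl, zero_le_one⟩
  have hΦ1 : Φ 1 = Real.log (m 1) := by simp only [hmdef]; exact hΦ 1
  -- ε > 0 via strict Jensen
  have hεpos : 0 < ε := by
    have hstrict := StrictConvexOn.ae_eq_const_or_map_average_lt strictConvexOn_exp
      Real.continuousOn_exp isClosed_univ (Filter.Eventually.of_forall fun ω => mem_univ _)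
      hint hexp
    rcases hstrict with hconst | hlt
    · exact absurd ⟨⨍ ω, X ω ∂P, hconst⟩ hnondeg
    · rw [average_eq_integral, average_eq_integral] at hlt
      have hm1pos : 0 < m 1 := hm_pos hmem1
      have hEXlt : EX < Φ 1 := by
        have h2 : Real.exp EX < m 1 := by
          rw [hmdef]
          simpa [one_mul] using hlt
        have h3 := Real.log_lt_log (Real.exp_pos EX) h2
        rw [Real.log_exp] at h3
        rw [hΦ1]
        exact h3
      rw [hε]
      linarith
  set c : ℝ := Φ 1 - ε with hcdef
  set f : ℝ → ℝ := fun θ => Real.log (m θ) - θ * c with hfdef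
  have hf0 : f 0 = 0 := by simp [hfdef, hm0]
  have hf1 : f 1 = ε := by simp [hfdef, hcdef, hΦ1]
  have hconv : ConvexOn ℝ (Icc (0 : ℝ) 1) f := by
    have h1 := tilting_convexOn_log_mgf (P := P) hXmeas hexp
    have h2 : ConvexOn ℝ (Icc (0 : ℝ) 1) (fun θ : ℝ => θ * (-c)) := by
      refine ⟨convex_Icc 0 1, fun x _ y _ a b _ _ _ => ?_⟩
      simp only [smul_eq_mul]
      exact le_of_eq (by ring)
    have h3 := h1.add h2
    have heqf : ((fun θ => Real.log (∫ ω, Real.exp (θ * X ω) ∂P)) + fun θ : ℝ => θ * (-c)) = f := by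
      funext θ
      simp only [Pi.add_apply, hfdef, hmdef]
      ring
    rwa [heqf] at h3
  -- continuity of m on [0,1]
  have hm_cont : ContinuousOn m (Icc (0 : ℝ) 1) := by
    intro θ hθ
    refine MeasureTheory.tendsto_integral_filter_of_dominated_convergence
      (fun ω => 1 + Real.exp (X ω)) ?_ ?_ ((integrable_const (1 : ℝ)).add hexp) ?_
    · exact Filter.Eventually.of_forall fun θ' =>
        (Real.measurable_exp.comp (measurable_const.mul hXmeas)).aestronglyMeasurable
    · filter_upwards [self_mem_nhdsWithin] with θ' hθ'
      refine Filter.Eventually.of_forall fun ω => ?_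
      have h1 : θ' * X ω ≤ max 0 (X ω) := by
        rcases le_total (X ω) 0 with h | h
        · exact le_max_of_le_left (mul_nonpos_iff.2 (Or.inl ⟨hθ'.1, h⟩))
        · have : θ' * X ω ≤ 1 * X ω := mul_le_mul_of_nonneg_right hθ'.2 h
          simpa using le_max_of_le_right this
      rw [Real.norm_of_nonneg (Real.exp_pos _).le]
      calc Real.exp (θ' * X ω) ≤ Real.exp (max 0 (X ω)) := Real.exp_le_exp.2 h1
        _ = max (Real.exp 0) (Real.exp (X ω)) := Real.exp_monotone.map_max
        _ ≤ 1 + Real.exp (X ω) := by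
            rw [Real.exp_zero]
            exact max_le (by nlinarith [Real.exp_pos (X ω)]) (by nlinarith [Real.exp_pos (X ω)])
    · refine Filter.Eventually.of_forall fun ω => ?_
      have : Continuous fun θ' : ℝ => Real.exp (θ' * X ω) :=
        Real.continuous_exp.comp (continuous_id.mul continuous_const)
      exact (this.tendsto θ).mono_left nhdsWithin_le_nhds
  have hf_cont : ContinuousOn f (Icc (0 : ℝ) 1) := by
    refine ContinuousOn.sub ?_ (by fun_prop)
    intro θ hθ
    exact (Real.continuousAt_log (hm_pos hθ).ne').comp_continuousWithinAt (hm_cont θ hθ)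
  -- small θ negativity: find θ0 ∈ (0,1) with f θ0 < 0
  have hEXltc : EX < c := by
    rw [hcdef, hε]
    linarith [hεpos, hε]
  obtain ⟨θ0, hθ0mem, hθ0lt⟩ : ∃ θ0 ∈ Ioo (0 : ℝ) 1, (m θ0 - 1) / θ0 < c := by
    have htend : Filter.Tendsto (fun θ => (m θ - 1) / θ) (nhdsWithin 0 (Ioi 0)) (nhds EX) := by
      have hIoo : Ioo (0 : ℝ) 1 ∈ nhdsWithin (0 : ℝ) (Ioi 0) :=
        Ioo_mem_nhdsGT_of_mem ⟨le_rfl, one_pos⟩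
      have hmain : Filter.Tendsto (fun θ => ∫ ω, (Real.exp (θ * X ω) - 1) / θ ∂P)
          (nhdsWithin 0 (Ioi 0)) (nhds EX) := by
        refine MeasureTheory.tendsto_integral_filter_of_dominated_convergence
          (fun ω => |X ω| + (Real.exp (X ω) + 1)) ?_ ?_
          ((hint.abs.add (hexp.add (integrable_const 1)))) ?_
        · refine Filter.Eventually.of_forall fun θ' => ?_
          exact (((Real.measurable_exp.comp (measurable_const.mul hXmeas)).sub
            measurable_const).div_const θ').aestronglyMeasurable
        · filter_upwards [hIoo] with θ' hθ'
          refine Filter.Eventually.of_forall fun ω => ?_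
          have hθ'pos : 0 < θ' := hθ'.1
          have hlow : X ω ≤ (Real.exp (θ' * X ω) - 1) / θ' := by
            rw [le_div_iff₀ hθ'pos]
            have := Real.add_one_le_exp (θ' * X ω)
            linarith
          have hupp : (Real.exp (θ' * X ω) - 1) / θ' ≤ Real.exp (X ω) - 1 := by
            rw [div_le_iff₀ hθ'pos]
            have hcvx := convexOn_exp.2 (mem_univ (X ω)) (mem_univ (0 : ℝ))
              hθ'pos.le (by linarith [hθ'.2] : (0:ℝ) ≤ 1 - θ') (by ring)
            simp only [smul_eq_mul, mul_zero, add_zero, Real.exp_zero, mul_one] at hcvx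
            nlinarith
          rw [Real.norm_eq_abs, abs_le]
          constructor
          · calc -(|X ω| + (Real.exp (X ω) + 1)) ≤ -|X ω| := by
                  have h1 : (0:ℝ) ≤ Real.exp (X ω) + 1 := by positivity
                  linarith
              _ ≤ X ω := neg_abs_le _
              _ ≤ _ := hlow
          · calc (Real.exp (θ' * X ω) - 1) / θ' ≤ Real.exp (X ω) - 1 := hupp
              _ ≤ |X ω| + (Real.exp (X ω) + 1) := by
                  have h1 : (0:ℝ) ≤ |X ω| := abs_nonneg _
                  linarith
        · refine Filter.Eventually.of_forall fun ω => ?_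
          have hderiv : HasDerivAt (fun θ : ℝ => Real.exp (θ * X ω)) (X ω) 0 := by
            have := (hasDerivAt_mul_const (X ω) (x := (0:ℝ))).exp
            simpa using this
          have hslope := hasDerivAt_iff_tendsto_slope.1 hderiv
          have hsub : nhdsWithin (0:ℝ) (Ioi 0) ≤ nhdsWithin (0:ℝ) {(0:ℝ)}ᶜ :=
            nhdsWithin_mono 0 (fun x hx => (ne_of_gt hx : x ≠ 0))
          refine (hslope.mono_left hsub).congr' ?_
          filter_upwards [self_mem_nhdsWithin] with θ' hθ'
          rw [slope_def_field]
          simp [div_eq_div_iff]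
      refine hmain.congr' ?_
      filter_upwards [hIoo] with θ' hθ'
      have hθ'mem : θ' ∈ Icc (0:ℝ) 1 := ⟨hθ'.1.le, hθ'.2.le⟩
      rw [integral_div, integral_sub (hm_int hθ'mem) (integrable_const 1), integral_const]
      simp [hmdef, measure_univ]
    have hev : ∀ᶠ θ in nhdsWithin (0:ℝ) (Ioi 0), (m θ - 1) / θ < c :=
      htend.eventually_lt_const hEXltc
    have hev2 : ∀ᶠ θ in nhdsWithin (0:ℝ) (Ioi 0), θ ∈ Ioo (0:ℝ) 1 :=
      Ioo_mem_nhdsGT_of_mem ⟨le_rfl, one_pos⟩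
    obtain ⟨θ0, h1, h2⟩ := (hev2.and hev).exists
    exact ⟨θ0, h1, h2⟩
  have hθ0Icc : θ0 ∈ Icc (0:ℝ) 1 := ⟨hθ0mem.1.le, hθ0mem.2.le⟩
  have hfθ0 : f θ0 < 0 := by
    have hlog := Real.log_le_sub_one_of_pos (hm_pos hθ0Icc)
    have : m θ0 - 1 < θ0 * c := by
      have := (div_lt_iff₀ hθ0mem.1).1 hθ0lt
      linarith
    simp only [hfdef]
    nlinarith
  -- existence of γ by IVT
  obtain ⟨γ, hγIoo01, hfγ⟩ : ∃ γ ∈ Ioo (0:ℝ) 1, f γ = 0 := by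
    have hsub : Icc θ0 1 ⊆ Icc (0:ℝ) 1 := Icc_subset_Icc hθ0mem.1.le le_rfl
    have hcont' : ContinuousOn f (Icc θ0 1) := hf_cont.mono hsub
    have hIVT := intermediate_value_Ioo hθ0mem.2.le hcont'
    have h0mem : (0:ℝ) ∈ Ioo (f θ0) (f 1) := ⟨hfθ0, by rw [hf1]; exact hεpos⟩
    obtain ⟨γ, hγ, hfγ⟩ := hIVT h0mem
    exact ⟨γ, ⟨lt_trans hθ0mem.1 hγ.1, hγ.2⟩, hfγ⟩
  -- uniqueness
  have huniq : ∀ γ' ∈ Ioo (0:ℝ) 1, f γ' = 0 → γ' = γ := by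
    have hkey : ∀ γ1 γ2 : ℝ, γ1 ∈ Ioo (0:ℝ) 1 → γ2 ∈ Ioo (0:ℝ) 1 → f γ1 = 0 → f γ2 = 0 →
        γ1 < γ2 → False := by
      intro γ1 γ2 h1 h2 hf1' hf2' hlt
      have h1Icc : γ1 ∈ Icc (0:ℝ) 1 := ⟨h1.1.le, h1.2.le⟩
      have h2Icc : γ2 ∈ Icc (0:ℝ) 1 := ⟨h2.1.le, h2.2.le⟩
      rcases lt_trichotomy γ1 θ0 with hc | hc | hc
      · -- 0 < γ1 < θ0
        have h := tilting_convex_point_le hconv hmem0 hθ0Icc h1.1 hc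
        rw [hf0, hf1', mul_zero, zero_add] at h
        have hcoef : 0 < (γ1 - 0) / (θ0 - 0) := by
          apply div_pos <;> simp [h1.1, hθ0mem.1]
        have := mul_neg_of_pos_of_neg hcoef hfθ0
        linarith
      · rw [hc] at hf1'; linarith
      · -- θ0 < γ1 < γ2
        have h := tilting_convex_point_le hconv hθ0Icc h2Icc hc hlt
        rw [hf1', hf2', mul_zero, add_zero] at h
        have hcoef : 0 < (γ2 - γ1) / (γ2 - θ0) := by
          apply div_pos <;> linarith
        have := mul_neg_of_pos_of_neg hcoef hfθ0
        linarith
    intro γ' hγ' hfγ'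
    rcases lt_trichotomy γ' γ with h | h | h
    · exact absurd (hkey γ' γ hγ' hγIoo01 hfγ' hfγ h) (fun h => h)
    · exact h
    · exact absurd (hkey γ γ' hγIoo01 hγ' hfγ hfγ' h) (fun h => h)
  -- equivalences of the two formulations
  have heq1 : ∀ γ' ∈ Ioo (0:ℝ) 1,
      Real.log (∫ ω, Real.exp (γ' * (X ω - Φ 1 + ε)) ∂P) = f γ' := by
    intro γ' hγ'
    have hIcc : γ' ∈ Icc (0:ℝ) 1 := ⟨hγ'.1.le, hγ'.2.le⟩
    have hfun : (fun ω => Real.exp (γ' * (X ω - Φ 1 + ε)))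
        = fun ω => Real.exp (γ' * X ω) * Real.exp (-(γ' * c)) := by
      funext ω
      rw [← Real.exp_add]
      congr 1
      simp only [hcdef]
      ring
    rw [hfun, integral_mul_const, Real.log_mul (hm_pos hIcc).ne' (Real.exp_ne_zero _),
      Real.log_exp]
    simp only [hfdef, hmdef]
    ring
  have heq2 : ∀ γ' : ℝ, Φ γ' - γ' * Φ 1 + γ' * ε = f γ' := by
    intro γ'
    rw [hΦ γ']
    simp only [hfdef, hcdef, hmdef]
    ring
  refine ⟨hεpos, ?_, ?_⟩
  · refine ⟨γ, ⟨hγIoo01, by rw [heq1 γ hγIoo01]; exact hfγ⟩, ?_⟩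
    rintro γ' ⟨h1, h2⟩
    exact huniq γ' h1 (by rwa [heq1 γ' h1] at h2)
  · refine ⟨γ, ⟨hγIoo01, by rw [heq2 γ]; exact hfγ⟩, ?_⟩
    rintro γ' ⟨h1, h2⟩
    exact huniq γ' h1 (by rwa [heq2 γ'] at h2)
end
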